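/- arXiv:1508.01759 — 10 statements merged into one kernel-verified Lean document; each statement's English description precedes it below -/
import Mathlib

section
/- Let G be a connected triangle-free graph with chromatic number k ≥ 2, and let H = G ⊠ K₂ be the strong product of G with K₂, i.e., the graph on vertex set V(G) × {0,1} in which (u,i) and (v,j) are adjacent if and only if (u = v and i ≠ j) or u and v are adjacent in G. Then H is K₃-WORM colorable and W^-(H) = 2. -/
open SimpleGraph

def IsWormColoring {V : Type*} (G : SimpleGraph V) (c : V → ℕ) : Prop :=
  ∀ u v w : V, G.Adj u v → G.Adj u w → G.Adj v w → ({c u, c v, c w} : Finset ℕ).card = 2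

def colorsUsed {V : Type*} [Fintype V] (c : V → ℕ) : ℕ := (Finset.univ.image c).card

def wormFeasible {V : Type*} [Fintype V] (G : SimpleGraph V) : Set ℕ :=
  {s | ∃ c : V → ℕ, IsWormColoring G c ∧ colorsUsed c = s}

def TriangleFree {V : Type*} (G : SimpleGraph V) : Prop :=
  ∀ u v w : V, G.Adj u v → G.Adj u w → G.Adj v w → False

def strongProdK2 {V : Type*} (G : SimpleGraph V) : SimpleGraph (V × Bool) :=
  SimpleGraph.fromRel (fun p q => (p.1 = q.1 ∧ p.2 ≠ q.2) ∨ G.Adj p.1 q.1)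

lemma strongProdK2_adj_iff {V : Type*} (G : SimpleGraph V) (a b : V × Bool) :
    (strongProdK2 G).Adj a b ↔ a ≠ b ∧ ((a.1 = b.1 ∧ a.2 ≠ b.2) ∨ G.Adj a.1 b.1) := by
  simp only [strongProdK2, SimpleGraph.fromRel_adj]
  constructor
  · rintro ⟨h1, h2⟩
    refine ⟨h1, ?_⟩
    rcases h2 with (h | h) | (⟨he, hb⟩ | h)
    · exact Or.inl h
    · exact Or.inr h
    · exact Or.inl ⟨he.symm, Ne.symm hb⟩
    · exact Or.inr h.symm
  · rintro ⟨h1, h2⟩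
    exact ⟨h1, Or.inl h2⟩

lemma worm_bool {V : Type*} (G : SimpleGraph V) (htf : TriangleFree G) :
    IsWormColoring (strongProdK2 G) (fun p => cond p.2 1 0) := by
  intro u v w huv huw hvw
  rw [strongProdK2_adj_iff] at huv huw hvw
  -- if all bools equal, derive G-triangle
  have key : ∀ a b : V × Bool, a ≠ b → ((a.1 = b.1 ∧ a.2 ≠ b.2) ∨ G.Adj a.1 b.1) →
      a.2 = b.2 → G.Adj a.1 b.1 := by
    rintro a b hab (⟨_, h2⟩ | h) he
    · exact absurd he h2
    · exact h
  by_cases h1 : u.2 = v.2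
  · by_cases h2 : u.2 = w.2
    · exact absurd (htf u.1 v.1 w.1 (key _ _ huv.1 huv.2 h1) (key _ _ huw.1 huw.2 h2)
        (key _ _ hvw.1 hvw.2 (h1 ▸ h2))) (fun h => h)
    · -- u.2 = v.2 ≠ w.2
      cases hu : u.2 <;> cases hv : v.2 <;> cases hw : w.2 <;> simp_all
  · cases hu : u.2 <;> cases hv : v.2 <;> cases hw : w.2 <;> simp_all

/-- If `G` is a connected triangle-free graph with chromatic number `k ≥ 2`, then
`H = G ⊠ K₂` is K₃-WORM colorable and its K₃-WORM lower chromatic number is 2. -/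
theorem wormLower_strongProdK2_eq_two {V : Type*} [Fintype V]
    (G : SimpleGraph V) (k : ℕ) (hk : 2 ≤ k)
    (hconn : G.Connected) (htf : TriangleFree G)
    (hchi : G.chromaticNumber = (k : ℕ∞)) :
    (∃ c : V × Bool → ℕ, IsWormColoring (strongProdK2 G) c) ∧
    IsLeast (wormFeasible (strongProdK2 G)) 2 := by
  have hne : Nonempty V := hconn.nonempty
  -- G has an edge
  have hedge : ∃ u v : V, G.Adj u v := by
    by_contra h
    push_neg at h
    have hcol : G.Colorable 1 := ⟨⟨fun _ => 0, fun {a b} hab => absurd hab (h a b)⟩⟩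
    have := hcol.chromaticNumber_le
    rw [hchi] at this
    have : (k : ℕ∞) ≤ (1 : ℕ) := by exact_mod_cast this
    have : k ≤ 1 := by exact_mod_cast this
    omega
  obtain ⟨u0, v0, huv0⟩ := hedge
  have hW := worm_bool G htf
  refine ⟨⟨_, hW⟩, ?_, ?_⟩
  · -- 2 ∈ wormFeasible
    refine ⟨fun p => cond p.2 1 0, hW, ?_⟩
    have himg : (Finset.univ.image (fun p : V × Bool => cond p.2 1 0)) = {0, 1} := by
      apply Finset.ext
      intro x
      simp only [Finset.mem_image, Finset.mem_univ, true_and, Finset.mem_insert,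
        Finset.mem_singleton]
      constructor
      · rintro ⟨p, rfl⟩; cases p.2 <;> simp
      · rintro (rfl | rfl)
        · exact ⟨(u0, false), rfl⟩
        · exact ⟨(u0, true), rfl⟩
    simp [colorsUsed, himg]
  · -- lower bound
    rintro s ⟨c, hc, rfl⟩
    -- triangle (u0,false),(u0,true),(v0,false)
    have t1 : (strongProdK2 G).Adj (u0, false) (u0, true) := by
      rw [strongProdK2_adj_iff]; simp
    have t2 : (strongProdK2 G).Adj (u0, false) (v0, false) := by
      rw [strongProdK2_adj_iff]
      exact ⟨by simp [huv0.ne], Or.inr huv0⟩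
    have t3 : (strongProdK2 G).Adj (u0, true) (v0, false) := by
      rw [strongProdK2_adj_iff]
      exact ⟨by simp [huv0.ne], Or.inr huv0⟩
    have hcard := hc _ _ _ t1 t2 t3
    have hsub : ({c (u0, false), c (u0, true), c (v0, false)} : Finset ℕ) ⊆
        Finset.univ.image c := by
      intro x hx
      simp only [Finset.mem_insert, Finset.mem_singleton] at hx
      rcases hx with rfl | rfl | rfl <;> exact Finset.mem_image_of_mem c (Finset.mem_univ _)
    calc 2 = ({c (u0, false), c (u0, true), c (v0, false)} : Finset ℕ).card := hcard.symm
      _ ≤ _ := Finset.card_le_card hsub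
end

section
/- Let G be a connected triangle-free graph on vertex set {v₁,…,vₙ}, and let H = G ⊠ K₂ be the graph on vertex set V(G) × {0,1} in which (u,i) and (v,j) are adjacent if and only if (u = v and i ≠ j) or u and v are adjacent in G. Then: (a) if c is a K₃-WORM coloring of H with c(v₁,0) = c(v₁,1), then c(v,0) = c(v,1) for every vertex v of G, and the map v ↦ c(v,0) is a proper vertex coloring of G using the same number of colors as c; (b) conversely, for every proper vertex coloring φ of G, the map (v,i) ↦ φ(v) is a K₃-WORM coloring of H using the same number of colors as φ. Hence for every s, the K₃-WORM colorings of H with exactly s colors in which (v₁,0) and (v₁,1) get the same color are in one-to-one correspondence with the proper vertex colorings of G with exactly s colors. -/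
open SimpleGraph

lemma worm_card_aab (a b : ℕ) (h : a ≠ b) : ({a,a,b}:Finset ℕ).card = 2 := by simp [h]

lemma worm_card_aba (a b : ℕ) (h : a ≠ b) : ({a,b,a}:Finset ℕ).card = 2 := by
  simp [h]; exact Finset.card_pair (Ne.symm h)

lemma worm_card_baa (a b : ℕ) (h : a ≠ b) : ({b,a,a}:Finset ℕ).card = 2 := by simp [h.symm]

lemma worm_ne_of_card (a b : ℕ) (h : ({a,a,b}:Finset ℕ).card = 2) : a ≠ b := by
  intro e; subst e; simp at h

lemma worm_eq_of_card (a b d : ℕ) (hab : a ≠ b) (had : a ≠ d)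
    (h : ({a,b,d}:Finset ℕ).card = 2) : b = d := by
  by_contra hbd
  rw [Finset.card_insert_of_notMem (by simp [hab, had]),
      Finset.card_insert_of_notMem (by simp [hbd]), Finset.card_singleton] at h
  omega

lemma strongProdK2_adj {V : Type*} (G : SimpleGraph V) (p q : V × Bool) :
    (strongProdK2 G).Adj p q ↔ p ≠ q ∧ ((p.1 = q.1 ∧ p.2 ≠ q.2) ∨ G.Adj p.1 q.1) := by
  simp only [strongProdK2, SimpleGraph.fromRel_adj]
  constructor
  · rintro ⟨hne, (h | (⟨h1, h2⟩ | h))⟩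
    · exact ⟨hne, h⟩
    · exact ⟨hne, Or.inl ⟨h1.symm, h2.symm⟩⟩
    · exact ⟨hne, Or.inr h.symm⟩
  · rintro ⟨hne, h⟩; exact ⟨hne, Or.inl h⟩

/-- For a connected triangle-free graph `G` with distinguished vertex `v₁` and
`H = G ⊠ K₂`:
(a) every K₃-WORM coloring `c` of `H` with `c (v₁,0) = c (v₁,1)` is monochromatic on
each pair `{(v,0),(v,1)}`, and `v ↦ c (v,0)` is a proper coloring of `G` with the same
number of colors;
(b) for every proper coloring `φ` of `G`, the map `(v,i) ↦ φ v` is a K₃-WORM coloring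
of `H` with the same number of colors;
hence, for every `s`, the K₃-WORM colorings of `H` with exactly `s` colors in which
`(v₁,0)` and `(v₁,1)` get the same color are in one-to-one correspondence with the
proper colorings of `G` with exactly `s` colors. -/
theorem strongProdK2_worm_correspondence {V : Type*} [Fintype V]
    (G : SimpleGraph V) (hconn : G.Connected) (htf : TriangleFree G) (v₁ : V) :
    (∀ c : V × Bool → ℕ, IsWormColoring (strongProdK2 G) c →
      c (v₁, false) = c (v₁, true) →
        (∀ v : V, c (v, false) = c (v, true)) ∧
        (∀ u v : V, G.Adj u v → c (u, false) ≠ c (v, false)) ∧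
        colorsUsed (fun v : V => c (v, false)) = colorsUsed c) ∧
    (∀ φ : V → ℕ, (∀ u v : V, G.Adj u v → φ u ≠ φ v) →
        IsWormColoring (strongProdK2 G) (fun p : V × Bool => φ p.1) ∧
        colorsUsed (fun p : V × Bool => φ p.1) = colorsUsed φ) ∧
    (∀ s : ℕ, Nonempty
      ({c : V × Bool → ℕ // IsWormColoring (strongProdK2 G) c ∧ colorsUsed c = s ∧
          c (v₁, false) = c (v₁, true)} ≃
       {φ : V → ℕ // (∀ u v : V, G.Adj u v → φ u ≠ φ v) ∧ colorsUsed φ = s})) := by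
  -- basic adjacencies in H
  have hvert : ∀ (u : V) (i j : Bool), i ≠ j → (strongProdK2 G).Adj (u, i) (u, j) := by
    intro u i j hij
    rw [strongProdK2_adj]
    exact ⟨by simp [hij], Or.inl ⟨rfl, hij⟩⟩
  have hhor : ∀ (u v : V) (i j : Bool), G.Adj u v → (strongProdK2 G).Adj (u, i) (v, j) := by
    intro u v i j huv
    rw [strongProdK2_adj]
    exact ⟨by simp [huv.ne], Or.inr huv⟩
  -- Part (a)
  have partA : ∀ c : V × Bool → ℕ, IsWormColoring (strongProdK2 G) c →
      c (v₁, false) = c (v₁, true) →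
        (∀ v : V, c (v, false) = c (v, true)) ∧
        (∀ u v : V, G.Adj u v → c (u, false) ≠ c (v, false)) ∧
        colorsUsed (fun v : V => c (v, false)) = colorsUsed c := by
    intro c hw h0
    -- key propagation step
    have key : ∀ u v : V, G.Adj u v → c (u, false) = c (u, true) →
        (c (v, false) = c (v, true) ∧ c (u, false) ≠ c (v, false)) := by
      intro u v huv hmono
      have hne : ∀ j : Bool, c (u, false) ≠ c (v, j) := by
        intro j
        have := hw (u, false) (u, true) (v, j) (hvert u false true (by simp))
          (hhor u v false j huv) (hhor u v true j huv)
        rw [← hmono] at this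
        exact worm_ne_of_card _ _ this
      have h2 := hw (u, false) (v, false) (v, true) (hhor u v false false huv)
        (hhor u v false true huv) (hvert v false true (by simp))
      exact ⟨worm_eq_of_card _ _ _ (hne false) (hne true) h2, hne false⟩
    have mono_walk : ∀ a b : V, G.Walk a b → c (b, false) = c (b, true) →
        c (a, false) = c (a, true) := by
      intro a b w
      induction w with
      | nil => exact id
      | cons hab p ih => exact fun hb => (key _ _ hab.symm (ih hb)).1
    have mono : ∀ v : V, c (v, false) = c (v, true) :=
      fun v => mono_walk v v₁ (hconn.preconnected v v₁).some h0
    refine ⟨mono, fun u v huv => (key u v huv (mono u)).2, ?_⟩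
    unfold colorsUsed
    congr 1
    ext x
    simp only [Finset.mem_image, Finset.mem_univ, true_and]
    constructor
    · rintro ⟨v, hv⟩; exact ⟨(v, false), hv⟩
    · rintro ⟨⟨v, b⟩, hv⟩
      cases b
      · exact ⟨v, hv⟩
      · exact ⟨v, (mono v).trans hv⟩
  -- Part (b)
  have partB : ∀ φ : V → ℕ, (∀ u v : V, G.Adj u v → φ u ≠ φ v) →
      IsWormColoring (strongProdK2 G) (fun p : V × Bool => φ p.1) ∧
      colorsUsed (fun p : V × Bool => φ p.1) = colorsUsed φ := by
    intro φ hφ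
    constructor
    · intro p q r hpq hpr hqr
      rw [strongProdK2_adj] at hpq hpr hqr
      obtain ⟨hpq0, hpq⟩ := hpq
      obtain ⟨hpr0, hpr⟩ := hpr
      obtain ⟨hqr0, hqr⟩ := hqr
      rcases hpq with ⟨e1, b1⟩ | a1
      · -- p q vertical
        rcases hpr with ⟨e2, b2⟩ | a2
        · -- p r vertical too: q.2 = r.2 since both differ from p.2 (Bool)
          have : q.2 = r.2 := by
            revert b1 b2; cases p.2 <;> cases q.2 <;> cases r.2 <;> simp
          rcases hqr with ⟨e3, b3⟩ | a3
          · exact absurd this b3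
          · rw [← e1, ← e2] at a3; exact absurd a3 (G.irrefl)
        · -- p r adjacent: colors {φ p.1, φ p.1, φ r.1}
          simp only [e1]
          exact worm_card_aab _ _ (hφ _ _ (e1 ▸ a2))
      · rcases hpr with ⟨e2, b2⟩ | a2
        · -- p r vertical: p.1 = r.1, p q adjacent
          simp only [← e2]
          exact worm_card_aba _ _ (hφ _ _ a1)
        · rcases hqr with ⟨e3, b3⟩ | a3
          · -- q r vertical: q.1 = r.1
            simp only [e3]
            exact worm_card_baa _ _ (Ne.symm (hφ _ _ a2))
          · exact absurd a3 (fun h => htf _ _ _ a1 a2 h)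
    · unfold colorsUsed
      congr 1
      ext x
      simp only [Finset.mem_image, Finset.mem_univ, true_and]
      constructor
      · rintro ⟨⟨v, b⟩, hv⟩; exact ⟨v, hv⟩
      · rintro ⟨v, hv⟩; exact ⟨(v, false), hv⟩
  refine ⟨partA, partB, fun s => ⟨?_⟩⟩
  refine
    { toFun := fun c => ⟨fun v => c.1 (v, false), (partA c.1 c.2.1 c.2.2.2).2.1,
        ((partA c.1 c.2.1 c.2.2.2).2.2).trans c.2.2.1⟩
      invFun := fun φ => ⟨fun p => φ.1 p.1, (partB φ.1 φ.2.1).1,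
        ((partB φ.1 φ.2.1).2).trans φ.2.2, rfl⟩
      left_inv := ?_
      right_inv := fun φ => rfl }
  rintro ⟨c, hw, hs, h0⟩
  apply Subtype.ext
  funext ⟨v, b⟩
  cases b
  · rfl
  · exact (partA c hw h0).1 v
end

section
/- Let G be a connected triangle-free graph with chromatic number k ≥ 4, and let H = G ⊠ K₂ be the graph on vertex set V(G) × {0,1} in which (u,i) and (v,j) are adjacent if and only if (u = v and i ≠ j) or u and v are adjacent in G. Then for every integer t with 3 ≤ t ≤ k − 1, the graph H admits no K₃-WORM coloring using exactly t colors. -/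
open SimpleGraph

/-- Values of a function constant along edges agree on reachable vertices. -/
lemma reach_const {V α : Type*} {G : SimpleGraph V} (f : V → α)
    (h : ∀ u v, G.Adj u v → f u = f v) {u v : V} (hr : G.Reachable u v) : f u = f v := by
  obtain ⟨p⟩ := hr
  induction p with
  | nil => rfl
  | cons ha _ ih => exact (h _ _ ha).trans ih

/-- If `G` is connected, triangle-free, with chromatic number `k ≥ 4`, then
`H = G ⊠ K₂` has no K₃-WORM coloring using exactly `t` colors for any `3 ≤ t ≤ k - 1`. -/
theorem strongProdK2_no_worm_coloring_in_gap {V : Type*} [Fintype V]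
    (G : SimpleGraph V) (k : ℕ) (hk : 4 ≤ k)
    (hconn : G.Connected) (htf : TriangleFree G)
    (hchi : G.chromaticNumber = (k : ℕ∞)) :
    ∀ t : ℕ, 3 ≤ t → t ≤ k - 1 →
      ¬ ∃ c : V × Bool → ℕ, IsWormColoring (strongProdK2 G) c ∧ colorsUsed c = t := by
  rintro t ht3 htk ⟨c, hworm, hcols⟩
  have hne : Nonempty V := hconn.nonempty
  -- basic adjacencies in H
  have hH1 : ∀ u : V, (strongProdK2 G).Adj (u, false) (u, true) := by
    intro u
    rw [strongProdK2, SimpleGraph.fromRel_adj]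
    exact ⟨by simp, Or.inl (Or.inl ⟨rfl, by simp⟩)⟩
  have hH2 : ∀ {u v : V} {i j : Bool}, G.Adj u v → (strongProdK2 G).Adj (u, i) (v, j) := by
    intro u v i j h
    rw [strongProdK2, SimpleGraph.fromRel_adj]
    exact ⟨fun he => h.ne (congrArg Prod.fst he), Or.inl (Or.inr h)⟩
  -- the WORM condition on the triangles of H
  have W : ∀ {u v : V}, G.Adj u v → ∀ i : Bool,
      ({c (u, false), c (u, true), c (v, i)} : Finset ℕ).card = 2 := by
    intro u v h i
    exact hworm _ _ _ (hH1 u) (hH2 h) (hH2 h)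
  -- mono vertex forces neighbors to avoid its color
  have mono_ne : ∀ {u v : V}, G.Adj u v → c (u, false) = c (u, true) →
      ∀ i, c (v, i) ≠ c (u, false) := by
    intro u v h hm i heq
    have hW := W h i
    rw [heq, ← hm] at hW
    simp at hW
  -- bi vertex forces neighbors' colors into its pair
  have bi_mem : ∀ {u v : V}, G.Adj u v → c (u, false) ≠ c (u, true) →
      ∀ i, c (v, i) = c (u, false) ∨ c (v, i) = c (u, true) := by
    intro u v h hb i
    by_contra hcon
    push_neg at hcon
    have hW := W h i
    have h1 : c (u, false) ∉ ({c (u, true), c (v, i)} : Finset ℕ) := by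
      simp [hb, Ne.symm hcon.1]
    have h2 : c (u, true) ∉ ({c (v, i)} : Finset ℕ) := by
      simp [Ne.symm hcon.2]
    rw [Finset.card_insert_of_notMem h1, Finset.card_insert_of_notMem h2,
      Finset.card_singleton] at hW
    omega
  -- mono-ness propagates along edges
  have mono_prop : ∀ u v : V, G.Adj u v → c (u, false) = c (u, true) →
      c (v, false) = c (v, true) := by
    intro u v h hm
    by_contra hb
    rcases bi_mem h.symm hb false with heq | heq
    · exact mono_ne h hm false heq.symm
    · exact mono_ne h hm true heq.symm
  have key : ∀ v : V, ∀ u : V, ((c (u, false) = c (u, true)) : Prop) =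
      ((c (v, false) = c (v, true)) : Prop) := by
    intro v u
    exact reach_const (fun w => ((c (w, false) = c (w, true)) : Prop))
      (fun a b hab => propext ⟨mono_prop a b hab, mono_prop b a hab.symm⟩)
      (hconn.preconnected u v)
  obtain ⟨v0⟩ := hne
  by_cases hm0 : c (v0, false) = c (v0, true)
  · -- all vertices mono: get a proper coloring of G with t < k colors
    have hall : ∀ v : V, c (v, false) = c (v, true) := by
      intro v
      exact (key v v0).symm ▸ hm0
    set g : V → ℕ := fun v => c (v, false) with hg
    have gproper : ∀ {u v : V}, G.Adj u v → g u ≠ g v := by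
      intro u v h heq
      exact mono_ne h (hall u) false heq.symm
    have himg : Finset.univ.image c = Finset.univ.image g := by
      apply Finset.Subset.antisymm
      · intro n hn
        simp only [Finset.mem_image, Finset.mem_univ, true_and] at hn ⊢
        obtain ⟨⟨v, i⟩, hv⟩ := hn
        cases i with
        | false => exact ⟨v, hv⟩
        | true => exact ⟨v, (hall v).trans hv⟩
      · intro n hn
        simp only [Finset.mem_image, Finset.mem_univ, true_and] at hn ⊢
        obtain ⟨v, hv⟩ := hn
        exact ⟨(v, false), hv⟩
    have hScard : (Finset.univ.image g).card = t := by
      rw [← himg]; exact hcols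
    have C : G.Coloring {x // x ∈ Finset.univ.image g} :=
      SimpleGraph.Coloring.mk
        (fun v => ⟨g v, Finset.mem_image_of_mem g (Finset.mem_univ v)⟩)
        (fun h heq => gproper h (Subtype.ext_iff.mp heq))
    have hcol : G.Colorable t := by
      have h1 := C.colorable
      rwa [Fintype.card_coe, hScard] at h1
    have hle := hcol.chromaticNumber_le
    rw [hchi] at hle
    have : k ≤ t := by exact_mod_cast hle
    omega
  · -- all vertices bi: only two colors are used
    have hallb : ∀ v : V, c (v, false) ≠ c (v, true) := by
      intro v hb
      exact hm0 ((key v0 v).symm ▸ hb)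
    have pair_eq : ∀ u v : V, G.Adj u v →
        ({c (u, false), c (u, true)} : Finset ℕ) = {c (v, false), c (v, true)} := by
      intro u v h
      rcases bi_mem h (hallb u) false with h1 | h1 <;>
        rcases bi_mem h (hallb u) true with h2 | h2
      · exact absurd (h1.trans h2.symm) (hallb v)
      · rw [h1, h2]
      · rw [h1, h2]; exact Finset.pair_comm _ _
      · exact absurd (h1.trans h2.symm) (hallb v)
    have pc : ∀ v : V, ({c (v, false), c (v, true)} : Finset ℕ) =
        {c (v0, false), c (v0, true)} := by
      intro v
      exact (reach_const (fun w => ({c (w, false), c (w, true)} : Finset ℕ))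
        pair_eq (hconn.preconnected v0 v)).symm
    have hsub : Finset.univ.image c ⊆ {c (v0, false), c (v0, true)} := by
      intro n hn
      simp only [Finset.mem_image, Finset.mem_univ, true_and] at hn
      obtain ⟨⟨v, i⟩, hv⟩ := hn
      have hmem : c (v, i) ∈ ({c (v, false), c (v, true)} : Finset ℕ) := by
        cases i <;> simp
      rw [pc v] at hmem
      rwa [hv] at hmem
    have h2 : colorsUsed c ≤ 2 := by
      refine le_trans (Finset.card_le_card hsub) ?_
      refine le_trans (Finset.card_insert_le _ _) ?_
      simp
    omega
end

section
/- Let G be a connected triangle-free graph on n ≥ 2 vertices with chromatic number k ≥ 2, and let H = G ⊠ K₂ be the graph on vertex set V(G) × {0,1} in which (u,i) and (v,j) are adjacent if and only if (u = v and i ≠ j) or u and v are adjacent in G. Then the K₃-WORM feasible set of H is exactly {2} ∪ {s : k ≤ s ≤ n}; that is, H has a K₃-WORM coloring with exactly s colors if and only if s = 2 or k ≤ s ≤ n. -/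
open SimpleGraph

section AuxWorm

variable {V : Type*} {G : SimpleGraph V}

lemma spk2_adj {p q : V × Bool} :
    (strongProdK2 G).Adj p q ↔ p ≠ q ∧ ((p.1 = q.1 ∧ p.2 ≠ q.2) ∨ G.Adj p.1 q.1) := by
  constructor
  · rintro ⟨h1, (h2 | h2) | (h2 | h2)⟩
    · exact ⟨h1, Or.inl h2⟩
    · exact ⟨h1, Or.inr h2⟩
    · exact ⟨h1, Or.inl ⟨h2.1.symm, h2.2.symm⟩⟩
    · exact ⟨h1, Or.inr h2.symm⟩
  · rintro ⟨h1, h2⟩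
    exact ⟨h1, Or.inl h2⟩

lemma spk2_adj_same {u : V} {i j : Bool} :
    (strongProdK2 G).Adj (u, i) (u, j) ↔ i ≠ j := by
  rw [spk2_adj]
  constructor
  · rintro ⟨-, (⟨-, h⟩ | h)⟩
    · exact h
    · exact absurd h (G.loopless.irrefl u)
  · intro h
    exact ⟨by simp [h], Or.inl ⟨rfl, h⟩⟩

lemma spk2_adj_of_adj {u v : V} (h : G.Adj u v) (i j : Bool) :
    (strongProdK2 G).Adj (u, i) (v, j) := by
  rw [spk2_adj]
  exact ⟨by simp [h.ne], Or.inr h⟩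

lemma spk2_bool_ne {p q : V × Bool} (h : (strongProdK2 G).Adj p q) (he : p.1 = q.1) :
    p.2 ≠ q.2 := by
  rw [spk2_adj] at h
  rcases h.2 with ⟨-, hne⟩ | hadj
  · exact hne
  · rw [he] at hadj
    exact absurd hadj (G.loopless.irrefl _)

lemma spk2_fst_adj {p q : V × Bool} (h : (strongProdK2 G).Adj p q) (he : p.1 ≠ q.1) :
    G.Adj p.1 q.1 := by
  rw [spk2_adj] at h
  rcases h.2 with ⟨h', -⟩ | hadj
  · exact absurd h' he
  · exact hadj

/-- In a triangle of `G ⊠ K₂` with `G` triangle-free, two vertices share the `V`-coordinate. -/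
lemma spk2_triangle (htf : TriangleFree G) {p q r : V × Bool}
    (h1 : (strongProdK2 G).Adj p q) (h2 : (strongProdK2 G).Adj p r)
    (h3 : (strongProdK2 G).Adj q r) :
    p.1 = q.1 ∨ p.1 = r.1 ∨ q.1 = r.1 := by
  by_contra hcon
  push_neg at hcon
  obtain ⟨e1, e2, e3⟩ := hcon
  exact htf _ _ _ (spk2_fst_adj h1 e1) (spk2_fst_adj h2 e2) (spk2_fst_adj h3 e3)

/-- If two vertices of a triangle share the `V`-coordinate, the third does not. -/
lemma spk2_triangle_third (htf : TriangleFree G) {p q r : V × Bool}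
    (h1 : (strongProdK2 G).Adj p q) (h2 : (strongProdK2 G).Adj p r)
    (h3 : (strongProdK2 G).Adj q r) (he : p.1 = q.1) : r.1 ≠ p.1 := by
  intro h
  have b1 := spk2_bool_ne h1 he
  have b2 := spk2_bool_ne h2 h.symm
  have b3 := spk2_bool_ne h3 (he.symm.trans h.symm)
  cases hp : p.2 <;> cases hq : q.2 <;> cases hr : r.2 <;> simp_all

lemma walk_spread {Q : V → Prop}
    (h : ∀ {x y}, G.Adj x y → Q x → Q y) {u v : V} (w : G.Walk u v) (hu : Q u) : Q v := by
  induction w with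
  | nil => exact hu
  | cons hadj p ih => exact ih (h hadj hu)

lemma mem_of_card_triple {a b x : ℕ} (hab : a ≠ b) (h : ({a, b, x} : Finset ℕ).card = 2) :
    x = a ∨ x = b := by
  by_contra hcon
  push_neg at hcon
  obtain ⟨h1, h2⟩ := hcon
  rw [Finset.card_insert_of_notMem (by simp [hab, Ne.symm h1]),
      Finset.card_insert_of_notMem (by simp [Ne.symm h2]), Finset.card_singleton] at h
  omega

lemma card_aab {x y : ℕ} (h : x ≠ y) : ({x, x, y} : Finset ℕ).card = 2 := by
  have e : ({x, x, y} : Finset ℕ) = {x, y} := by ext z; simp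
  rw [e]; exact Finset.card_pair h

lemma card_aba {x y : ℕ} (h : x ≠ y) : ({x, y, x} : Finset ℕ).card = 2 := by
  have e : ({x, y, x} : Finset ℕ) = {x, y} := by ext z; simp; tauto
  rw [e]; exact Finset.card_pair h

lemma card_baa {x y : ℕ} (h : x ≠ y) : ({y, x, x} : Finset ℕ).card = 2 := by
  have e : ({y, x, x} : Finset ℕ) = {y, x} := by ext z; simp
  rw [e]; exact Finset.card_pair (Ne.symm h)

lemma ne_of_card_aab {x y : ℕ} (h : ({x, x, y} : Finset ℕ).card = 2) : x ≠ y := by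
  intro he
  subst he
  simp at h

end AuxWorm

section AuxColor

variable {V : Type*} [Fintype V] {G : SimpleGraph V}

/-- Any proper ℕ-coloring of `G` uses at least `χ(G)` colors. -/
lemma chrom_le_colors {f : V → ℕ} (hf : ∀ {u v}, G.Adj u v → f u ≠ f v) :
    G.chromaticNumber ≤ ((Finset.univ.image f).card : ℕ∞) := by
  have C : G.Coloring ↥(Finset.univ.image f) :=
    Coloring.mk (fun v => ⟨f v, Finset.mem_image_of_mem f (Finset.mem_univ v)⟩)
      (fun h => by simpa [Subtype.ext_iff] using hf h)
  simpa [Fintype.card_coe] using C.colorable.chromaticNumber_le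

/-- Splitting a color class gives a proper coloring using one more color. -/
lemma step_coloring {f : V → ℕ} (hf : ∀ {u v}, G.Adj u v → f u ≠ f v)
    (hlt : (Finset.univ.image f).card < Fintype.card V) :
    ∃ g : V → ℕ, (∀ {u v}, G.Adj u v → g u ≠ g v) ∧
      (Finset.univ.image g).card = (Finset.univ.image f).card + 1 := by
  classical
  obtain ⟨u, -, v, -, huv, hfe⟩ :=
    Finset.exists_ne_map_eq_of_card_lt_of_maps_to
      (by convert lt_of_lt_of_eq hlt Finset.card_univ.symm)
      (fun x _ => Finset.mem_image_of_mem f (Finset.mem_univ x))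
  set m : ℕ := (Finset.univ.image f).sup id + 1 with hm
  have hmnot : m ∉ Finset.univ.image f := by
    intro hmem
    have := Finset.le_sup (f := id) hmem
    simp only [id] at this
    omega
  refine ⟨Function.update f u m, ?_, ?_⟩
  · intro a b hab
    have hmf : ∀ x : V, m ≠ f x := fun x h =>
      hmnot (h ▸ Finset.mem_image_of_mem f (Finset.mem_univ x))
    by_cases ha : a = u
    · by_cases hb : b = u
      · rw [ha, hb] at hab; exact absurd hab (G.loopless.irrefl _)
      · rw [ha, Function.update_self, Function.update_of_ne hb]; exact hmf b
    · rw [Function.update_of_ne ha]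
      by_cases hb : b = u
      · rw [hb, Function.update_self]; exact (hmf a).symm
      · rw [Function.update_of_ne hb]; exact hf hab
  · have himg : Finset.univ.image (Function.update f u m)
        = insert m (Finset.univ.image f) := by
      ext x
      simp only [Finset.mem_image, Finset.mem_univ, true_and, Finset.mem_insert]
      constructor
      · rintro ⟨w, rfl⟩
        by_cases hw : w = u
        · exact Or.inl (by rw [hw, Function.update_self])
        · exact Or.inr ⟨w, (Function.update_of_ne hw _ _).symm⟩
      · rintro (rfl | ⟨w, rfl⟩)
        · exact ⟨u, Function.update_self _ _ _⟩
        · by_cases hw : w = u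
          · exact ⟨v, by rw [Function.update_of_ne (Ne.symm huv), hw]; exact hfe.symm⟩
          · exact ⟨w, Function.update_of_ne hw _ _⟩
    rw [himg, Finset.card_insert_of_notMem hmnot]

/-- For every `s` with `χ(G) ≤ s ≤ n` there is a proper coloring using exactly `s` colors. -/
lemma exists_proper_exact {k : ℕ} (hchi : G.chromaticNumber = (k : ℕ∞)) :
    ∀ s : ℕ, k ≤ s → s ≤ Fintype.card V →
      ∃ f : V → ℕ, (∀ {u v}, G.Adj u v → f u ≠ f v) ∧ (Finset.univ.image f).card = s := by
  intro s hks hsn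
  induction s, hks using Nat.le_induction with
  | base =>
    have hcol : G.Colorable k := by
      rw [← chromaticNumber_le_iff_colorable, hchi]
    obtain ⟨C⟩ := hcol
    refine ⟨fun v => (C v : ℕ), fun h => by
      have := C.valid h
      simpa [Fin.val_eq_val] using this, ?_⟩
    have hle : (Finset.univ.image fun v => ((C v : ℕ))).card ≤ k := by
      calc (Finset.univ.image fun v => ((C v : ℕ))).card
          ≤ (Finset.range k).card := Finset.card_le_card (by
            intro x hx
            simp only [Finset.mem_image] at hx
            obtain ⟨v, -, rfl⟩ := hx
            simp [Finset.mem_range, (C v).isLt])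
        _ = k := Finset.card_range k
    have hge : (k : ℕ∞) ≤ ((Finset.univ.image fun v => ((C v : ℕ))).card : ℕ∞) := by
      rw [← hchi]; exact chrom_le_colors (fun h => by
        have := C.valid h
        simpa [Fin.val_eq_val] using this)
    have hge' : k ≤ (Finset.univ.image fun v => ((C v : ℕ))).card := by
      exact_mod_cast hge
    exact le_antisymm hle hge'
  | succ s hks ih =>
    obtain ⟨f, hf, hcard⟩ := ih (by omega)
    obtain ⟨g, hg, hgc⟩ := step_coloring hf (by omega)
    exact ⟨g, hg, by omega⟩

end AuxColor

/-- If `G` is a connected triangle-free graph on `n ≥ 2` vertices with chromatic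
number `k ≥ 2`, then the K₃-WORM feasible set of `H = G ⊠ K₂` is exactly
`{2} ∪ {s : k ≤ s ≤ n}`. -/
theorem strongProdK2_wormFeasible_eq {V : Type*} [Fintype V]
    (G : SimpleGraph V) (k : ℕ) (hk : 2 ≤ k) (hn : 2 ≤ Fintype.card V)
    (hconn : G.Connected) (htf : TriangleFree G)
    (hchi : G.chromaticNumber = (k : ℕ∞)) :
    ∀ s : ℕ, s ∈ wormFeasible (strongProdK2 G) ↔
      (s = 2 ∨ (k ≤ s ∧ s ≤ Fintype.card V)) := by
  intro s
  constructor
  · -- necessity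
    rintro ⟨c, hw, rfl⟩
    by_cases hP : ∀ u : V, c (u, false) = c (u, true)
    · -- all pairs monochromatic: c comes from a proper coloring of G
      right
      set f : V → ℕ := fun u => c (u, false) with hfdef
      have hf : ∀ {u v : V}, G.Adj u v → f u ≠ f v := by
        intro u v huv heq
        have h2 := hw (u, false) (u, true) (v, false)
          (spk2_adj_same.2 (by simp)) (spk2_adj_of_adj huv _ _) (spk2_adj_of_adj huv _ _)
        rw [← hP u] at h2
        exact (ne_of_card_aab h2) heq
      have himg : Finset.univ.image c = Finset.univ.image f := by
        ext x
        simp only [Finset.mem_image, Finset.mem_univ, true_and]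
        constructor
        · rintro ⟨⟨u, j⟩, rfl⟩
          cases j
          · exact ⟨u, rfl⟩
          · exact ⟨u, hP u⟩
        · rintro ⟨u, rfl⟩
          exact ⟨(u, false), rfl⟩
      constructor
      · have h1 := chrom_le_colors hf
        rw [hchi] at h1
        have h2 : k ≤ (Finset.univ.image f).card := by exact_mod_cast h1
        simp only [colorsUsed]
        rw [himg]
        exact h2
      · simp only [colorsUsed]
        rw [himg]
        exact Finset.card_image_le.trans (le_of_eq (Finset.card_univ))
    · -- some bichromatic pair: exactly two colors are used everywhere
      left
      push_neg at hP
      obtain ⟨u0, hu0⟩ := hP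
      set a : ℕ := c (u0, false) with ha
      set b : ℕ := c (u0, true) with hb
      have key : ∀ {x y : V}, G.Adj x y →
          (c (x, false) ≠ c (x, true) ∧ ({c (x, false), c (x, true)} : Finset ℕ) = {a, b}) →
          (c (y, false) ≠ c (y, true) ∧ ({c (y, false), c (y, true)} : Finset ℕ) = {a, b}) := by
        intro x y hxy hQ
        obtain ⟨hne, hset⟩ := hQ
        have t : ∀ j : Bool, ({c (x, false), c (x, true), c (y, j)} : Finset ℕ).card = 2 :=
          fun j => hw (x, false) (x, true) (y, j)
            (spk2_adj_same.2 (by simp)) (spk2_adj_of_adj hxy _ _) (spk2_adj_of_adj hxy _ _)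
        have hyj : ∀ j : Bool, c (y, j) = c (x, false) ∨ c (y, j) = c (x, true) :=
          fun j => mem_of_card_triple hne (t j)
        have hyne : c (y, false) ≠ c (y, true) := by
          intro heq
          have t2 : ∀ j : Bool, ({c (y, false), c (y, true), c (x, j)} : Finset ℕ).card = 2 :=
            fun j => hw (y, false) (y, true) (x, j)
              (spk2_adj_same.2 (by simp)) (spk2_adj_of_adj hxy.symm _ _)
              (spk2_adj_of_adj hxy.symm _ _)
          have hxf : c (y, false) ≠ c (x, false) := by
            have := t2 false
            rw [← heq] at this
            exact ne_of_card_aab this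
          have hxt : c (y, false) ≠ c (x, true) := by
            have := t2 true
            rw [← heq] at this
            exact ne_of_card_aab this
          rcases hyj false with h | h
          · exact hxf h
          · exact hxt h
        refine ⟨hyne, ?_⟩
        rw [← hset]
        apply Finset.eq_of_subset_of_card_le
        · intro z hz
          simp only [Finset.mem_insert, Finset.mem_singleton] at hz ⊢
          rcases hz with rfl | rfl
          · exact hyj false
          · exact hyj true
        · rw [Finset.card_pair hne, Finset.card_pair hyne]
      have hall : ∀ v : V, c (v, false) ≠ c (v, true) ∧
          ({c (v, false), c (v, true)} : Finset ℕ) = {a, b} := by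
        intro v
        obtain ⟨w⟩ := hconn.preconnected u0 v
        exact walk_spread key w ⟨hu0, rfl⟩
      have himg : Finset.univ.image c = {a, b} := by
        apply Finset.Subset.antisymm
        · intro x hx
          simp only [Finset.mem_image, Finset.mem_univ, true_and] at hx
          obtain ⟨⟨v, j⟩, rfl⟩ := hx
          have hv := (hall v).2
          have hmem : c (v, j) ∈ ({c (v, false), c (v, true)} : Finset ℕ) := by
            cases j <;> simp
          rw [hv] at hmem
          exact hmem
        · intro x hx
          simp only [Finset.mem_insert, Finset.mem_singleton] at hx
          simp only [Finset.mem_image, Finset.mem_univ, true_and]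
          rcases hx with rfl | rfl
          · exact ⟨(u0, false), rfl⟩
          · exact ⟨(u0, true), rfl⟩
      simp only [colorsUsed]
      rw [himg, Finset.card_pair hu0]
  · -- sufficiency
    have hV : Nonempty V := Fintype.card_pos_iff.mp (by omega)
    rintro (rfl | ⟨hks, hsn⟩)
    · -- two colors: color by the Bool coordinate
      obtain ⟨v0⟩ := hV
      refine ⟨fun p => cond p.2 1 0, ?_, ?_⟩
      · intro p q r h1 h2 h3
        have hne : p.2 ≠ q.2 ∨ p.2 ≠ r.2 ∨ q.2 ≠ r.2 := by
          rcases spk2_triangle htf h1 h2 h3 with he | he | he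
          · exact Or.inl (spk2_bool_ne h1 he)
          · exact Or.inr (Or.inl (spk2_bool_ne h2 he))
          · exact Or.inr (Or.inr (spk2_bool_ne h3 he))
        show ({cond p.2 1 0, cond q.2 1 0, cond r.2 1 0} : Finset ℕ).card = 2
        revert hne
        cases p.2 <;> cases q.2 <;> cases r.2 <;> decide
      · have himg : Finset.univ.image (fun p : V × Bool => cond p.2 1 0) = {0, 1} := by
          apply Finset.Subset.antisymm
          · intro x hx
            simp only [Finset.mem_image, Finset.mem_univ, true_and] at hx
            obtain ⟨⟨v, j⟩, rfl⟩ := hx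
            cases j <;> simp
          · intro x hx
            simp only [Finset.mem_insert, Finset.mem_singleton] at hx
            simp only [Finset.mem_image, Finset.mem_univ, true_and]
            rcases hx with rfl | rfl
            · exact ⟨(v0, false), rfl⟩
            · exact ⟨(v0, true), rfl⟩
        simp only [colorsUsed]
        rw [himg]
        rfl
    · -- s colors with k ≤ s ≤ n: pull back a proper coloring of G
      obtain ⟨f, hf, hcard⟩ := exists_proper_exact hchi s hks hsn
      refine ⟨fun p => f p.1, ?_, ?_⟩
      · intro p q r h1 h2 h3
        show ({f p.1, f q.1, f r.1} : Finset ℕ).card = 2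
        rcases spk2_triangle htf h1 h2 h3 with he | he | he
        · have hr := spk2_triangle_third htf h1 h2 h3 he
          have hadj : G.Adj p.1 r.1 := spk2_fst_adj h2 (fun h => hr h.symm)
          rw [show f q.1 = f p.1 from (congrArg f he).symm]
          exact card_aab (hf hadj)
        · -- p.1 = r.1 : q is the odd one out
          have hr := spk2_triangle_third htf h2 h1 (h3.symm) he
          have hadj : G.Adj p.1 q.1 := spk2_fst_adj h1 (fun h => hr h.symm)
          rw [show f r.1 = f p.1 from (congrArg f he).symm]
          exact card_aba (hf hadj)
        · -- q.1 = r.1 : p is the odd one out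
          have hr := spk2_triangle_third htf h3 (h1.symm) (h2.symm) he
          have hadj : G.Adj q.1 p.1 := spk2_fst_adj h1.symm (fun h => hr h.symm)
          rw [show f r.1 = f q.1 from (congrArg f he).symm]
          exact card_baa (hf hadj)
      · have himg : Finset.univ.image (fun p : V × Bool => f p.1) = Finset.univ.image f := by
          ext x
          simp only [Finset.mem_image, Finset.mem_univ, true_and]
          constructor
          · rintro ⟨⟨u, j⟩, rfl⟩
            exact ⟨u, rfl⟩
          · rintro ⟨u, rfl⟩
            exact ⟨(u, false), rfl⟩
        simp only [colorsUsed]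
        rw [himg, hcard]
end

section
/- For every integer k ≥ 3 there exists a finite K₃-WORM colorable graph F_k such that W^-(F_k) = k; that is, F_k admits a K₃-WORM coloring with exactly k colors but admits none with fewer than k colors. -/
open SimpleGraph

lemma card2_iff (a b c : ℕ) : ({a, b, c} : Finset ℕ).card = 2 ↔
    (a = b ∧ a ≠ c) ∨ (a = c ∧ a ≠ b) ∨ (b = c ∧ a ≠ b) := by
  rcases eq_or_ne a b with hab | hab <;> rcases eq_or_ne a c with hac | hac <;>
    rcases eq_or_ne b c with hbc | hbc <;>
    simp_all [Finset.card_insert_of_notMem, Finset.mem_insert, Finset.mem_singleton]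

private lemma dmem {A B r : ℕ} (h : (A = B ∧ A ≠ r) ∨ (A = r ∧ A ≠ B) ∨ (B = r ∧ A ≠ B))
    (hne : A ≠ B) : r = A ∨ r = B := by tauto

private lemma dne {A B r s : ℕ}
    (ha : (A = r ∧ A ≠ s) ∨ (A = s ∧ A ≠ r) ∨ (r = s ∧ A ≠ r))
    (hb : (B = r ∧ B ≠ s) ∨ (B = s ∧ B ≠ r) ∨ (r = s ∧ B ≠ r))
    (hr : r = A ∨ r = B) (hne : A ≠ B) : r ≠ s := by omega

private lemma deq {A r s : ℕ}
    (ha : (A = r ∧ A ≠ s) ∨ (A = s ∧ A ≠ r) ∨ (r = s ∧ A ≠ r))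
    (hnr : r ≠ A) (hns : s ≠ A) : r = s := by tauto

private lemma dneA {A r : ℕ}
    (h : (A = A ∧ A ≠ r) ∨ (A = r ∧ A ≠ A) ∨ (A = r ∧ A ≠ A)) : r ≠ A := by tauto

/-- Rigidity of the double-hub odd-wheel: hubs `A,B` joined to each other and to a 5-cycle rim. -/
lemma hub5 (A B r1 r2 r3 r4 r5 : ℕ)
    (h1 : ({A, B, r1} : Finset ℕ).card = 2) (h2 : ({A, B, r2} : Finset ℕ).card = 2)
    (h3 : ({A, B, r3} : Finset ℕ).card = 2) (h4 : ({A, B, r4} : Finset ℕ).card = 2)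
    (h5 : ({A, B, r5} : Finset ℕ).card = 2)
    (ha1 : ({A, r1, r2} : Finset ℕ).card = 2) (ha2 : ({A, r2, r3} : Finset ℕ).card = 2)
    (ha3 : ({A, r3, r4} : Finset ℕ).card = 2) (ha4 : ({A, r4, r5} : Finset ℕ).card = 2)
    (ha5 : ({A, r5, r1} : Finset ℕ).card = 2)
    (hb1 : ({B, r1, r2} : Finset ℕ).card = 2) (hb2 : ({B, r2, r3} : Finset ℕ).card = 2)
    (hb3 : ({B, r3, r4} : Finset ℕ).card = 2) (hb4 : ({B, r4, r5} : Finset ℕ).card = 2)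
    (hb5 : ({B, r5, r1} : Finset ℕ).card = 2) :
    A = B ∧ r1 = r2 ∧ r2 = r3 ∧ r3 = r4 ∧ r4 = r5 ∧ r1 ≠ A := by
  rw [card2_iff] at h1 h2 h3 h4 h5 ha1 ha2 ha3 ha4 ha5 hb1 hb2 hb3 hb4 hb5
  have hAB : A = B := by
    by_contra hne
    have m1 := dmem h1 hne; have m2 := dmem h2 hne; have m3 := dmem h3 hne
    have m4 := dmem h4 hne; have m5 := dmem h5 hne
    have d1 := dne ha1 hb1 m1 hne
    have d2 := dne ha2 hb2 m2 hne
    have d3 := dne ha3 hb3 m3 hne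
    have d4 := dne ha4 hb4 m4 hne
    have d5 := dne ha5 hb5 m5 hne
    rcases m1 with e | e
    · subst e
      have e2 : r2 = B := m2.resolve_left fun h => d1 h.symm
      have e3 : r3 = r1 := m3.resolve_right fun h => d2 (e2.trans h.symm)
      have e4 : r4 = B := m4.resolve_left fun h => d3 (e3.trans h.symm)
      have e5 : r5 = r1 := m5.resolve_right fun h => d4 (e4.trans h.symm)
      exact absurd e5 d5
    · subst e
      have e2 : r2 = A := m2.resolve_right fun h => d1 h.symm
      have e3 : r3 = r1 := m3.resolve_left fun h => d2 (e2.trans h.symm)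
      have e4 : r4 = A := m4.resolve_right fun h => d3 (e3.trans h.symm)
      have e5 : r5 = r1 := m5.resolve_left fun h => d4 (e4.trans h.symm)
      exact absurd e5 d5
  subst hAB
  have n1 := dneA h1; have n2 := dneA h2; have n3 := dneA h3
  have n4 := dneA h4; have n5 := dneA h5
  have e1 := deq ha1 n1 n2
  have e2 := deq ha2 n2 n3
  have e3 := deq ha3 n3 n4
  have e4 := deq ha4 n4 n5
  exact ⟨rfl, e1, e2, e3, e4, n1⟩

def gPairs : List (Fin 11 × Fin 11) :=
  [(0,1),(0,2),(0,3),(0,4),(0,5),(1,2),(2,3),(3,4),(4,5),(5,1),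
   (1,6),(1,7),(1,8),(1,9),(1,10),(6,7),(7,8),(8,9),(9,10),(10,6)]

def gAdj (t t' : Fin 11) : Bool := gPairs.contains (t, t') || gPairs.contains (t', t)

/-- gadget vertices adjacent to the smaller terminal `i`. -/
def sideI (t : Fin 11) : Bool := t.val ≤ 5
/-- gadget vertices adjacent to the larger terminal `j`. -/
def sideJ (t : Fin 11) : Bool := t.val = 1 || 6 ≤ t.val
/-- color side: rim 1–5 gets color `j`, the rest color `i`. -/
def cside (t : Fin 11) : Bool := 1 ≤ t.val && t.val ≤ 5

abbrev WV (k : ℕ) := Fin k ⊕ (Fin k × Fin k × Fin 11)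

def wAdj (k : ℕ) : WV k → WV k → Prop
  | .inl _, .inl _ => False
  | .inl m, .inr (i, j, t) => i < j ∧ ((m = i ∧ sideI t) ∨ (m = j ∧ sideJ t))
  | .inr (i, j, t), .inl m => i < j ∧ ((m = i ∧ sideI t) ∨ (m = j ∧ sideJ t))
  | .inr (i, j, t), .inr (i', j', t') => i = i' ∧ j = j' ∧ i < j ∧ gAdj t t'

lemma gAdj_symm : ∀ t t' : Fin 11, gAdj t t' → gAdj t' t := by decide
lemma gAdj_irrefl : ∀ t : Fin 11, ¬ gAdj t t := by decide

def wGraph (k : ℕ) : SimpleGraph (WV k) where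
  Adj := wAdj k
  symm := by
    constructor
    rintro (m | ⟨i, j, t⟩) (m' | ⟨i', j', t'⟩) h
    · exact h.elim
    · exact h
    · exact h
    · obtain ⟨h1, h2, h3, h4⟩ := h
      subst h1; subst h2
      exact ⟨rfl, rfl, h3, gAdj_symm _ _ h4⟩
  loopless := by
    constructor
    rintro (m | ⟨i, j, t⟩) h
    · exact h
    · exact gAdj_irrefl t h.2.2.2

-- decidable facts used for the upper bound
lemma fact_int : ∀ t t' t'' : Fin 11, gAdj t t' → gAdj t t'' → gAdj t' t'' →
    ¬(cside t = cside t' ∧ cside t' = cside t'') := by decide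
lemma fact_i : ∀ t t' : Fin 11, sideI t → sideI t' → gAdj t t' → cside t ∨ cside t' := by decide
lemma fact_j : ∀ t t' : Fin 11, sideJ t → sideJ t' → gAdj t t' → ¬(cside t ∧ cside t') := by decide

lemma terminal_ne {k : ℕ} {c : WV k → ℕ} (hw : IsWormColoring (wGraph k) c)
    {i j : Fin k} (hij : i < j) : c (Sum.inl i) ≠ c (Sum.inl j) := by
  have h1 := hw (Sum.inl i : WV k) (Sum.inr (i, j, (0 : Fin 11)) : WV k) (Sum.inr (i, j, (1 : Fin 11)) : WV k) ⟨hij, Or.inl ⟨rfl, by decide⟩⟩ ⟨hij, Or.inl ⟨rfl, by decide⟩⟩ ⟨rfl, rfl, hij, by decide⟩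
  have h2 := hw (Sum.inl i : WV k) (Sum.inr (i, j, (0 : Fin 11)) : WV k) (Sum.inr (i, j, (2 : Fin 11)) : WV k) ⟨hij, Or.inl ⟨rfl, by decide⟩⟩ ⟨hij, Or.inl ⟨rfl, by decide⟩⟩ ⟨rfl, rfl, hij, by decide⟩
  have h3 := hw (Sum.inl i : WV k) (Sum.inr (i, j, (0 : Fin 11)) : WV k) (Sum.inr (i, j, (3 : Fin 11)) : WV k) ⟨hij, Or.inl ⟨rfl, by decide⟩⟩ ⟨hij, Or.inl ⟨rfl, by decide⟩⟩ ⟨rfl, rfl, hij, by decide⟩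
  have h4 := hw (Sum.inl i : WV k) (Sum.inr (i, j, (0 : Fin 11)) : WV k) (Sum.inr (i, j, (4 : Fin 11)) : WV k) ⟨hij, Or.inl ⟨rfl, by decide⟩⟩ ⟨hij, Or.inl ⟨rfl, by decide⟩⟩ ⟨rfl, rfl, hij, by decide⟩
  have h5 := hw (Sum.inl i : WV k) (Sum.inr (i, j, (0 : Fin 11)) : WV k) (Sum.inr (i, j, (5 : Fin 11)) : WV k) ⟨hij, Or.inl ⟨rfl, by decide⟩⟩ ⟨hij, Or.inl ⟨rfl, by decide⟩⟩ ⟨rfl, rfl, hij, by decide⟩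
  have ha1 := hw (Sum.inl i : WV k) (Sum.inr (i, j, (1 : Fin 11)) : WV k) (Sum.inr (i, j, (2 : Fin 11)) : WV k) ⟨hij, Or.inl ⟨rfl, by decide⟩⟩ ⟨hij, Or.inl ⟨rfl, by decide⟩⟩ ⟨rfl, rfl, hij, by decide⟩
  have ha2 := hw (Sum.inl i : WV k) (Sum.inr (i, j, (2 : Fin 11)) : WV k) (Sum.inr (i, j, (3 : Fin 11)) : WV k) ⟨hij, Or.inl ⟨rfl, by decide⟩⟩ ⟨hij, Or.inl ⟨rfl, by decide⟩⟩ ⟨rfl, rfl, hij, by decide⟩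
  have ha3 := hw (Sum.inl i : WV k) (Sum.inr (i, j, (3 : Fin 11)) : WV k) (Sum.inr (i, j, (4 : Fin 11)) : WV k) ⟨hij, Or.inl ⟨rfl, by decide⟩⟩ ⟨hij, Or.inl ⟨rfl, by decide⟩⟩ ⟨rfl, rfl, hij, by decide⟩
  have ha4 := hw (Sum.inl i : WV k) (Sum.inr (i, j, (4 : Fin 11)) : WV k) (Sum.inr (i, j, (5 : Fin 11)) : WV k) ⟨hij, Or.inl ⟨rfl, by decide⟩⟩ ⟨hij, Or.inl ⟨rfl, by decide⟩⟩ ⟨rfl, rfl, hij, by decide⟩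
  have ha5 := hw (Sum.inl i : WV k) (Sum.inr (i, j, (5 : Fin 11)) : WV k) (Sum.inr (i, j, (1 : Fin 11)) : WV k) ⟨hij, Or.inl ⟨rfl, by decide⟩⟩ ⟨hij, Or.inl ⟨rfl, by decide⟩⟩ ⟨rfl, rfl, hij, by decide⟩
  have hb1 := hw (Sum.inr (i, j, (0 : Fin 11)) : WV k) (Sum.inr (i, j, (1 : Fin 11)) : WV k) (Sum.inr (i, j, (2 : Fin 11)) : WV k) ⟨rfl, rfl, hij, by decide⟩ ⟨rfl, rfl, hij, by decide⟩ ⟨rfl, rfl, hij, by decide⟩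
  have hb2 := hw (Sum.inr (i, j, (0 : Fin 11)) : WV k) (Sum.inr (i, j, (2 : Fin 11)) : WV k) (Sum.inr (i, j, (3 : Fin 11)) : WV k) ⟨rfl, rfl, hij, by decide⟩ ⟨rfl, rfl, hij, by decide⟩ ⟨rfl, rfl, hij, by decide⟩
  have hb3 := hw (Sum.inr (i, j, (0 : Fin 11)) : WV k) (Sum.inr (i, j, (3 : Fin 11)) : WV k) (Sum.inr (i, j, (4 : Fin 11)) : WV k) ⟨rfl, rfl, hij, by decide⟩ ⟨rfl, rfl, hij, by decide⟩ ⟨rfl, rfl, hij, by decide⟩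
  have hb4 := hw (Sum.inr (i, j, (0 : Fin 11)) : WV k) (Sum.inr (i, j, (4 : Fin 11)) : WV k) (Sum.inr (i, j, (5 : Fin 11)) : WV k) ⟨rfl, rfl, hij, by decide⟩ ⟨rfl, rfl, hij, by decide⟩ ⟨rfl, rfl, hij, by decide⟩
  have hb5 := hw (Sum.inr (i, j, (0 : Fin 11)) : WV k) (Sum.inr (i, j, (5 : Fin 11)) : WV k) (Sum.inr (i, j, (1 : Fin 11)) : WV k) ⟨rfl, rfl, hij, by decide⟩ ⟨rfl, rfl, hij, by decide⟩ ⟨rfl, rfl, hij, by decide⟩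
  have k6 := hw (Sum.inl j : WV k) (Sum.inr (i, j, (1 : Fin 11)) : WV k) (Sum.inr (i, j, (6 : Fin 11)) : WV k) ⟨hij, Or.inr ⟨rfl, by decide⟩⟩ ⟨hij, Or.inr ⟨rfl, by decide⟩⟩ ⟨rfl, rfl, hij, by decide⟩
  have k7 := hw (Sum.inl j : WV k) (Sum.inr (i, j, (1 : Fin 11)) : WV k) (Sum.inr (i, j, (7 : Fin 11)) : WV k) ⟨hij, Or.inr ⟨rfl, by decide⟩⟩ ⟨hij, Or.inr ⟨rfl, by decide⟩⟩ ⟨rfl, rfl, hij, by decide⟩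
  have k8 := hw (Sum.inl j : WV k) (Sum.inr (i, j, (1 : Fin 11)) : WV k) (Sum.inr (i, j, (8 : Fin 11)) : WV k) ⟨hij, Or.inr ⟨rfl, by decide⟩⟩ ⟨hij, Or.inr ⟨rfl, by decide⟩⟩ ⟨rfl, rfl, hij, by decide⟩
  have k9 := hw (Sum.inl j : WV k) (Sum.inr (i, j, (1 : Fin 11)) : WV k) (Sum.inr (i, j, (9 : Fin 11)) : WV k) ⟨hij, Or.inr ⟨rfl, by decide⟩⟩ ⟨hij, Or.inr ⟨rfl, by decide⟩⟩ ⟨rfl, rfl, hij, by decide⟩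
  have k10 := hw (Sum.inl j : WV k) (Sum.inr (i, j, (1 : Fin 11)) : WV k) (Sum.inr (i, j, (10 : Fin 11)) : WV k) ⟨hij, Or.inr ⟨rfl, by decide⟩⟩ ⟨hij, Or.inr ⟨rfl, by decide⟩⟩ ⟨rfl, rfl, hij, by decide⟩
  have ka1 := hw (Sum.inl j : WV k) (Sum.inr (i, j, (6 : Fin 11)) : WV k) (Sum.inr (i, j, (7 : Fin 11)) : WV k) ⟨hij, Or.inr ⟨rfl, by decide⟩⟩ ⟨hij, Or.inr ⟨rfl, by decide⟩⟩ ⟨rfl, rfl, hij, by decide⟩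
  have ka2 := hw (Sum.inl j : WV k) (Sum.inr (i, j, (7 : Fin 11)) : WV k) (Sum.inr (i, j, (8 : Fin 11)) : WV k) ⟨hij, Or.inr ⟨rfl, by decide⟩⟩ ⟨hij, Or.inr ⟨rfl, by decide⟩⟩ ⟨rfl, rfl, hij, by decide⟩
  have ka3 := hw (Sum.inl j : WV k) (Sum.inr (i, j, (8 : Fin 11)) : WV k) (Sum.inr (i, j, (9 : Fin 11)) : WV k) ⟨hij, Or.inr ⟨rfl, by decide⟩⟩ ⟨hij, Or.inr ⟨rfl, by decide⟩⟩ ⟨rfl, rfl, hij, by decide⟩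
  have ka4 := hw (Sum.inl j : WV k) (Sum.inr (i, j, (9 : Fin 11)) : WV k) (Sum.inr (i, j, (10 : Fin 11)) : WV k) ⟨hij, Or.inr ⟨rfl, by decide⟩⟩ ⟨hij, Or.inr ⟨rfl, by decide⟩⟩ ⟨rfl, rfl, hij, by decide⟩
  have ka5 := hw (Sum.inl j : WV k) (Sum.inr (i, j, (10 : Fin 11)) : WV k) (Sum.inr (i, j, (6 : Fin 11)) : WV k) ⟨hij, Or.inr ⟨rfl, by decide⟩⟩ ⟨hij, Or.inr ⟨rfl, by decide⟩⟩ ⟨rfl, rfl, hij, by decide⟩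
  have kb1 := hw (Sum.inr (i, j, (1 : Fin 11)) : WV k) (Sum.inr (i, j, (6 : Fin 11)) : WV k) (Sum.inr (i, j, (7 : Fin 11)) : WV k) ⟨rfl, rfl, hij, by decide⟩ ⟨rfl, rfl, hij, by decide⟩ ⟨rfl, rfl, hij, by decide⟩
  have kb2 := hw (Sum.inr (i, j, (1 : Fin 11)) : WV k) (Sum.inr (i, j, (7 : Fin 11)) : WV k) (Sum.inr (i, j, (8 : Fin 11)) : WV k) ⟨rfl, rfl, hij, by decide⟩ ⟨rfl, rfl, hij, by decide⟩ ⟨rfl, rfl, hij, by decide⟩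
  have kb3 := hw (Sum.inr (i, j, (1 : Fin 11)) : WV k) (Sum.inr (i, j, (8 : Fin 11)) : WV k) (Sum.inr (i, j, (9 : Fin 11)) : WV k) ⟨rfl, rfl, hij, by decide⟩ ⟨rfl, rfl, hij, by decide⟩ ⟨rfl, rfl, hij, by decide⟩
  have kb4 := hw (Sum.inr (i, j, (1 : Fin 11)) : WV k) (Sum.inr (i, j, (9 : Fin 11)) : WV k) (Sum.inr (i, j, (10 : Fin 11)) : WV k) ⟨rfl, rfl, hij, by decide⟩ ⟨rfl, rfl, hij, by decide⟩ ⟨rfl, rfl, hij, by decide⟩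
  have kb5 := hw (Sum.inr (i, j, (1 : Fin 11)) : WV k) (Sum.inr (i, j, (10 : Fin 11)) : WV k) (Sum.inr (i, j, (6 : Fin 11)) : WV k) ⟨rfl, rfl, hij, by decide⟩ ⟨rfl, rfl, hij, by decide⟩ ⟨rfl, rfl, hij, by decide⟩
  obtain ⟨HA, e12, e23, e34, e45, Hne⟩ := hub5 _ _ _ _ _ _ _ h1 h2 h3 h4 h5 ha1 ha2 ha3 ha4 ha5 hb1 hb2 hb3 hb4 hb5
  obtain ⟨HY, _, _, _, _, _⟩ := hub5 _ _ _ _ _ _ _ k6 k7 k8 k9 k10 ka1 ka2 ka3 ka4 ka5 kb1 kb2 kb3 kb4 kb5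
  intro h
  exact Hne (HY.symm.trans h.symm)

def wCol (k : ℕ) : WV k → ℕ
  | .inl m => m.val
  | .inr (i, j, t) => if cside t then j.val else i.val

lemma card_two_of_two (x y a b c : ℕ) (hxy : x ≠ y)
    (ha : a = x ∨ a = y) (hb : b = x ∨ b = y) (hc : c = x ∨ c = y)
    (hne : ¬(a = b ∧ b = c)) : ({a, b, c} : Finset ℕ).card = 2 := by
  rw [card2_iff]
  rcases ha with rfl | rfl <;> rcases hb with rfl | rfl <;> rcases hc with rfl | rfl <;> tauto

lemma mem_colg (x y : ℕ) (t : Fin 11) :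
    (if cside t then y else x) = x ∨ (if cside t then y else x) = y := by
  by_cases h : cside t <;> simp [h]

lemma key_i {x y : ℕ} (hxy : x ≠ y) {t t' : Fin 11} (h : sideI t) (h' : sideI t')
    (hg : gAdj t t') :
    ¬(x = (if cside t then y else x) ∧
      (if cside t then y else x) = (if cside t' then y else x)) := by
  have hf := fact_i t t' h h' hg
  by_cases ht : cside t <;> by_cases ht' : cside t' <;> (try simp_all) <;> omega

lemma key_j {x y : ℕ} (hxy : x ≠ y) {t t' : Fin 11} (h : sideJ t) (h' : sideJ t')
    (hg : gAdj t t') :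
    ¬(y = (if cside t then y else x) ∧
      (if cside t then y else x) = (if cside t' then y else x)) := by
  have hf := fact_j t t' h h' hg
  by_cases ht : cside t <;> by_cases ht' : cside t' <;> (try simp_all) <;> omega

lemma key_int {x y : ℕ} (hxy : x ≠ y) {t t' t'' : Fin 11}
    (hg1 : gAdj t t') (hg2 : gAdj t t'') (hg3 : gAdj t' t'') :
    ¬((if cside t then y else x) = (if cside t' then y else x) ∧
      (if cside t' then y else x) = (if cside t'' then y else x)) := by
  have hf := fact_int t t' t'' hg1 hg2 hg3
  by_cases h1 : cside t <;> by_cases h2 : cside t' <;> by_cases h3 : cside t'' <;>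
    (try simp_all) <;> omega

lemma wCol_worm (k : ℕ) : IsWormColoring (wGraph k) (wCol k) := by
  intro u v w h1 h2 h3
  rcases u with m | ⟨i, j, t⟩ <;> rcases v with m' | ⟨i', j', t'⟩ <;>
    rcases w with m'' | ⟨i'', j'', t''⟩
  · exact h1.elim
  · exact h1.elim
  · exact h2.elim
  · -- inl, inr, inr
    obtain ⟨hlt, H1⟩ := h1
    obtain ⟨-, H2⟩ := h2
    obtain ⟨e1, e2, -, hg⟩ := h3
    subst e1; subst e2
    have hxy := Nat.ne_of_lt (Fin.lt_def.mp hlt)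
    rcases H1 with ⟨rfl, hs1⟩ | ⟨rfl, hs1⟩ <;> rcases H2 with ⟨e, hs2⟩ | ⟨e, hs2⟩
    · exact card_two_of_two _ _ _ _ _ hxy (Or.inl rfl)
        (mem_colg _ _ _) (mem_colg _ _ _) (key_i hxy hs1 hs2 hg)
    · exact absurd e (ne_of_lt hlt)
    · exact absurd e.symm (ne_of_lt hlt)
    · exact card_two_of_two _ _ _ _ _ hxy (Or.inr rfl)
        (mem_colg _ _ _) (mem_colg _ _ _) (key_j hxy hs1 hs2 hg)
  · exact h3.elim
  · -- inr, inl, inr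
    obtain ⟨hlt, H1⟩ := h1
    obtain ⟨e1, e2, -, hg⟩ := h2
    obtain ⟨-, H2⟩ := h3
    subst e1; subst e2
    have hxy := Nat.ne_of_lt (Fin.lt_def.mp hlt)
    rcases H1 with ⟨rfl, hs1⟩ | ⟨rfl, hs1⟩ <;> rcases H2 with ⟨e, hs2⟩ | ⟨e, hs2⟩
    · exact card_two_of_two _ _ _ _ _ hxy
        (mem_colg _ _ _) (Or.inl rfl) (mem_colg _ _ _)
        (fun ⟨p, q⟩ => key_i hxy hs1 hs2 hg ⟨p.symm, p.trans q⟩)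
    · exact absurd e (ne_of_lt hlt)
    · exact absurd e.symm (ne_of_lt hlt)
    · exact card_two_of_two _ _ _ _ _ hxy
        (mem_colg _ _ _) (Or.inr rfl) (mem_colg _ _ _)
        (fun ⟨p, q⟩ => key_j hxy hs1 hs2 hg ⟨p.symm, p.trans q⟩)
  · -- inr, inr, inl
    obtain ⟨e1, e2, hlt, hg⟩ := h1
    obtain ⟨-, H1⟩ := h2
    obtain ⟨-, H2⟩ := h3
    subst e1; subst e2
    have hxy := Nat.ne_of_lt (Fin.lt_def.mp hlt)
    rcases H1 with ⟨rfl, hs1⟩ | ⟨rfl, hs1⟩ <;> rcases H2 with ⟨e, hs2⟩ | ⟨e, hs2⟩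
    · exact card_two_of_two _ _ _ _ _ hxy
        (mem_colg _ _ _) (mem_colg _ _ _) (Or.inl rfl)
        (fun ⟨p, q⟩ => key_i hxy hs1 hs2 hg ⟨(p.trans q).symm, p⟩)
    · exact absurd e (ne_of_lt hlt)
    · exact absurd e.symm (ne_of_lt hlt)
    · exact card_two_of_two _ _ _ _ _ hxy
        (mem_colg _ _ _) (mem_colg _ _ _) (Or.inr rfl)
        (fun ⟨p, q⟩ => key_j hxy hs1 hs2 hg ⟨(p.trans q).symm, p⟩)
  · -- inr, inr, inr
    obtain ⟨e1, e2, hlt, hg1⟩ := h1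
    obtain ⟨e3, e4, -, hg2⟩ := h2
    obtain ⟨-, -, -, hg3⟩ := h3
    subst e1; subst e2; subst e3; subst e4
    have hxy := Nat.ne_of_lt (Fin.lt_def.mp hlt)
    exact card_two_of_two _ _ _ _ _ hxy
      (mem_colg _ _ _) (mem_colg _ _ _) (mem_colg _ _ _) (key_int hxy hg1 hg2 hg3)

lemma wCol_used (k : ℕ) (hk : 0 < k) : colorsUsed (wCol k) = k := by
  unfold colorsUsed
  have : Finset.univ.image (wCol k) = Finset.range k := by
    apply Finset.Subset.antisymm
    · intro x hx
      rw [Finset.mem_image] at hx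
      obtain ⟨v, -, rfl⟩ := hx
      rcases v with m | ⟨i, j, t⟩
      · exact Finset.mem_range.mpr m.isLt
      · by_cases h : cside t <;> simp only [wCol, h, if_true, if_false] <;>
          exact Finset.mem_range.mpr (Fin.isLt _)
    · intro x hx
      rw [Finset.mem_range] at hx
      exact Finset.mem_image.mpr ⟨Sum.inl ⟨x, hx⟩, Finset.mem_univ _, rfl⟩
  rw [this, Finset.card_range]

lemma count_ge {k : ℕ} {c : WV k → ℕ} (hw : IsWormColoring (wGraph k) c) :
    k ≤ colorsUsed c := by
  have hinj : Function.Injective (fun m : Fin k => c (Sum.inl m)) := by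
    intro a b h
    by_contra hne
    rcases Ne.lt_or_gt hne with hl | hl
    · exact terminal_ne hw hl h
    · exact terminal_ne hw hl h.symm
  have h1 : (Finset.univ.image fun m : Fin k => c (Sum.inl m)).card = k := by
    rw [Finset.card_image_of_injective _ hinj, Finset.card_univ, Fintype.card_fin]
  have h2 : (Finset.univ.image fun m : Fin k => c (Sum.inl m)) ⊆ Finset.univ.image c := by
    intro x hx
    rw [Finset.mem_image] at hx ⊢
    obtain ⟨a, -, rfl⟩ := hx
    exact ⟨Sum.inl a, Finset.mem_univ _, rfl⟩
  calc k = _ := h1.symm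
    _ ≤ _ := Finset.card_le_card h2

lemma image_comp_equiv {α β : Type*} [Fintype α] [Fintype β] [DecidableEq β]
    (e : α ≃ β) (c : β → ℕ) :
    Finset.univ.image (c ∘ e) = Finset.univ.image c := by
  ext x
  simp only [Finset.mem_image, Function.comp_apply, Finset.mem_univ, true_and]
  constructor
  · rintro ⟨a, rfl⟩; exact ⟨e a, rfl⟩
  · rintro ⟨b, rfl⟩; exact ⟨e.symm b, by simp⟩


/-- For every `k ≥ 3` there exists a finite K₃-WORM colorable graph whose
K₃-WORM lower chromatic number is exactly `k`: it has a K₃-WORM coloring with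
exactly `k` colors, but none with fewer colors. -/
theorem exists_graph_wormLower_eq {k : ℕ} (hk : 3 ≤ k) :
    ∃ (n : ℕ) (G : SimpleGraph (Fin n)),
      (∃ c : Fin n → ℕ, IsWormColoring G c) ∧
      IsLeast (wormFeasible G) k := by
  classical
  set n := Fintype.card (WV k) with hn
  set e : WV k ≃ Fin n := Fintype.equivFin (WV k) with he
  refine ⟨n, SimpleGraph.comap e.symm (wGraph k), ?_, ?_, ?_⟩
  · exact ⟨wCol k ∘ e.symm, fun u v w h1 h2 h3 => wCol_worm k _ _ _ h1 h2 h3⟩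
  · refine ⟨wCol k ∘ e.symm, fun u v w h1 h2 h3 => wCol_worm k _ _ _ h1 h2 h3, ?_⟩
    show colorsUsed (wCol k ∘ e.symm) = k
    unfold colorsUsed
    rw [image_comp_equiv e.symm (wCol k)]
    exact wCol_used k (by omega)
  · rintro s ⟨c', hc', rfl⟩
    have hw2 : IsWormColoring (wGraph k) (c' ∘ e) := by
      intro u v w h1 h2 h3
      have a1 : (SimpleGraph.comap e.symm (wGraph k)).Adj (e u) (e v) := by
        show (wGraph k).Adj (e.symm (e u)) (e.symm (e v))
        simpa using h1
      have a2 : (SimpleGraph.comap e.symm (wGraph k)).Adj (e u) (e w) := by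
        show (wGraph k).Adj (e.symm (e u)) (e.symm (e w))
        simpa using h2
      have a3 : (SimpleGraph.comap e.symm (wGraph k)).Adj (e v) (e w) := by
        show (wGraph k).Adj (e.symm (e v)) (e.symm (e w))
        simpa using h3
      exact hc' (e u) (e v) (e w) a1 a2 a3
    have := count_ge hw2
    show k ≤ colorsUsed c'
    calc k ≤ colorsUsed (c' ∘ e) := this
      _ = colorsUsed c' := by unfold colorsUsed; rw [image_comp_equiv e c']
end

section
/- Let G be a connected triangle-free graph with chromatic number k ≥ 3, let H = G ⊠ K₂ be the graph on vertex set V(G) × {0,1} in which (u,i) and (v,j) are adjacent iff (u = v and i ≠ j) or u and v are adjacent in G, and fix a vertex v₁ of G. Let F be the graph obtained from three vertex-disjoint copies H¹, H², H³ of H by identifying (v₁,0) of H¹ with (v₁,1) of H², identifying (v₁,0) of H² with (v₁,1) of H³, and identifying (v₁,0) of H³ with (v₁,1) of H¹. Then F is K₃-WORM colorable and W^-(F) = k. -/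
open SimpleGraph

/-- Representative map for the identifications
`x¹₁ = y²₁`, `x²₁ = y³₁`, `x³₁ = y¹₁` on three disjoint copies of `G ⊠ K₂`:
copy `i`'s vertex `(v₁, 1)` is identified with copy `i-1`'s vertex `(v₁, 0)`
(so that `(v₁,0)` of copy `i` equals `(v₁,1)` of copy `i+1`). -/
def rep {V : Type*} [DecidableEq V] (v₁ : V) (p : Fin 3 × V × Bool) : Fin 3 × V × Bool :=
  if p.2.1 = v₁ ∧ p.2.2 = true then (p.1 - 1, v₁, false) else p

/-- The graph `F` obtained from three vertex-disjoint copies of `H = G ⊠ K₂` by the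
three identifications `x¹₁ = y²₁`, `x²₁ = y³₁`, `x³₁ = y¹₁`: vertices are the
representatives, and two vertices are adjacent iff they have preimages in a common copy
of `H` that are adjacent in `H`. -/
def tripleGlue {V : Type*} [DecidableEq V] (G : SimpleGraph V) (v₁ : V) :
    SimpleGraph {p : Fin 3 × V × Bool // rep v₁ p = p} :=
  SimpleGraph.fromRel (fun q q' => ∃ (i : Fin 3) (a b : V × Bool),
    rep v₁ (i, a) = q.val ∧ rep v₁ (i, b) = q'.val ∧ (strongProdK2 G).Adj a b)


section Aux
variable {V : Type*} [DecidableEq V] {G : SimpleGraph V} {v₁ : V}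

lemma adj_strong {a b : V × Bool} :
    (strongProdK2 G).Adj a b ↔ (a.1 = b.1 ∧ a.2 ≠ b.2) ∨ G.Adj a.1 b.1 := by
  constructor
  · rintro ⟨hne, (h | h) | (⟨h1, h2⟩ | h)⟩
    · exact Or.inl h
    · exact Or.inr h
    · exact Or.inl ⟨h1.symm, Ne.symm h2⟩
    · exact Or.inr h.symm
  · intro h
    refine ⟨?_, Or.inl h⟩
    rintro rfl
    rcases h with ⟨_, h⟩ | h
    · exact h rfl
    · exact G.loopless.irrefl _ h

lemma adj_strong_pair (u : V) : (strongProdK2 G).Adj (u, false) (u, true) :=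
  adj_strong.2 (Or.inl ⟨rfl, by simp⟩)

lemma rep_fix {p : Fin 3 × V × Bool} (h : p.2 ≠ (v₁, true)) : rep v₁ p = p := by
  apply if_neg
  rintro ⟨h1, h2⟩
  exact h (by rw [← h1, ← h2])

lemma rep_fix' (m : Fin 3) (u : V) : rep v₁ (m, u, false) = (m, u, false) :=
  rep_fix (by simp)

lemma rep_top (i : Fin 3) : rep v₁ (i, v₁, true) = (i - 1, v₁, false) := if_pos ⟨rfl, rfl⟩

lemma rep_idem (p : Fin 3 × V × Bool) : rep v₁ (rep v₁ p) = rep v₁ p := by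
  by_cases h : p.2.1 = v₁ ∧ p.2.2 = true
  · have h2 : rep v₁ p = (p.1 - 1, v₁, false) := if_pos h
    rw [h2]; exact rep_fix' _ _
  · have h2 : rep v₁ p = p := if_neg h
    rw [h2, h2]

lemma rep_eq_cases {i : Fin 3} {a : V × Bool} {x : Fin 3 × V × Bool}
    (h : rep v₁ (i, a) = x) :
    ((i, a) = x ∧ a ≠ (v₁, true)) ∨ (a = (v₁, true) ∧ x = (i - 1, v₁, false)) := by
  by_cases ha : a = (v₁, true)
  · subst ha; right; exact ⟨rfl, by rw [← h, rep_top]⟩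
  · left; exact ⟨by rw [← h, rep_fix ha], ha⟩

/-- `q` has a preimage in copy `m`. -/
def HasPre (v₁ : V) (m : Fin 3) (q : Fin 3 × V × Bool) : Prop :=
  q.1 = m ∨ q = (m - 1, v₁, false)

/-- the preimage of `q` in copy `m`. -/
def pre (v₁ : V) (m : Fin 3) (q : Fin 3 × V × Bool) : V × Bool :=
  if q.1 = m then q.2 else (v₁, true)

lemma sub_one_ne (m : Fin 3) : m - 1 ≠ m := by revert m; decide

lemma pre_spec {m : Fin 3} {q : Fin 3 × V × Bool} (hfix : rep v₁ q = q)
    (h : HasPre v₁ m q) : rep v₁ (m, pre v₁ m q) = q := by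
  rcases h with h | h
  · subst h
    rw [pre, if_pos rfl]
    calc rep v₁ (q.1, q.2) = rep v₁ q := by rw [Prod.mk.eta]
    _ = q := hfix
  · subst h
    rw [pre, if_neg (by simpa using (sub_one_ne m))]
    exact rep_top m

lemma pre_unique {m : Fin 3} {a : V × Bool} {q : Fin 3 × V × Bool}
    (h : rep v₁ (m, a) = q) : a = pre v₁ m q ∧ HasPre v₁ m q := by
  rcases rep_eq_cases h with ⟨h1, h2⟩ | ⟨h1, h2⟩
  · subst h1
    exact ⟨by rw [pre, if_pos rfl], Or.inl rfl⟩
  · subst h1 h2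
    exact ⟨by rw [pre, if_neg (by simpa using (sub_one_ne m))], Or.inr rfl⟩

lemma hasPre_ne {m m' : Fin 3} {q : Fin 3 × V × Bool} (hmm : m ≠ m')
    (h : HasPre v₁ m q) (h' : HasPre v₁ m' q) : q.2 = (v₁, false) := by
  rcases h with h | h <;> rcases h' with h' | h'
  · exact absurd (h.symm.trans h') hmm
  · rw [h']
  · rw [h]
  · rw [h]

lemma sub_left_cancel : ∀ {m m' : Fin 3}, m - 1 = m' - 1 → m = m' := by
  decide

end Aux

section Aux2
variable {V : Type*} [DecidableEq V] {G : SimpleGraph V} {v₁ : V}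

lemma adj_glue {q q' : {p : Fin 3 × V × Bool // rep v₁ p = p}} :
    (tripleGlue G v₁).Adj q q' ↔ q ≠ q' ∧ ∃ (i : Fin 3) (a b : V × Bool),
      rep v₁ (i, a) = q.val ∧ rep v₁ (i, b) = q'.val ∧ (strongProdK2 G).Adj a b := by
  rw [tripleGlue, fromRel_adj]
  constructor
  · rintro ⟨hne, ⟨i, a, b, h1, h2, h3⟩ | ⟨i, a, b, h1, h2, h3⟩⟩
    · exact ⟨hne, i, a, b, h1, h2, h3⟩
    · exact ⟨hne, i, b, a, h2, h1, h3.symm⟩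
  · rintro ⟨hne, h⟩
    exact ⟨hne, Or.inl h⟩

lemma adj_transfer {q q' : {p : Fin 3 × V × Bool // rep v₁ p = p}} (m : Fin 3)
    (h : (tripleGlue G v₁).Adj q q') (hq : HasPre v₁ m q.val) (hq' : HasPre v₁ m q'.val) :
    (strongProdK2 G).Adj (pre v₁ m q.val) (pre v₁ m q'.val) := by
  rw [adj_glue] at h
  obtain ⟨hne, i, a, b, h1, h2, h3⟩ := h
  by_cases him : i = m
  · subst him
    rw [← (pre_unique h1).1, ← (pre_unique h2).1]
    exact h3
  · -- q and q' both lie in copies i and m, with i ≠ m, so both are w-vertices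
    have hqi := (pre_unique h1).2
    have hq'i := (pre_unique h2).2
    have hqw : q.val.2 = (v₁, false) := hasPre_ne him hqi hq
    have hq'w : q'.val.2 = (v₁, false) := hasPre_ne him hq'i hq'
    -- their preimages in copy m are (v₁, false) and (v₁, true) in some order
    have key : ∀ r : Fin 3 × V × Bool, r.2 = (v₁, false) → HasPre v₁ m r →
        pre v₁ m r = (v₁, false) ∨ (pre v₁ m r = (v₁, true) ∧ r.1 = m - 1) := by
      intro r hr2 hrp
      by_cases h1 : r.1 = m
      · left; rw [pre, if_pos h1, hr2]
      · right
        rcases hrp with h | h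
        · exact absurd h h1
        · rw [pre, if_neg h1]
          exact ⟨rfl, by rw [h]⟩
    have hne' : q.val ≠ q'.val := fun hc => hne (Subtype.ext hc)
    rcases key q.val hqw hq with h4 | ⟨h4, h5⟩ <;> rcases key q'.val hq'w hq' with h6 | ⟨h6, h7⟩
    · -- both (v₁, false): then q.val = q'.val
      exfalso
      apply hne'
      have e1 : q.val.1 = m := by
        by_contra hc
        rcases hq with h | h
        · exact hc h
        · rw [pre, if_neg hc] at h4; simp at h4
      have e2 : q'.val.1 = m := by
        by_contra hc
        rcases hq' with h | h
        · exact hc h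
        · rw [pre, if_neg hc] at h6; simp at h6
      calc q.val = (q.val.1, q.val.2) := by rw [Prod.mk.eta]
      _ = (m, v₁, false) := by rw [e1, hqw]
      _ = (q'.val.1, q'.val.2) := by rw [e2, hq'w]
      _ = q'.val := by rw [Prod.mk.eta]
    · rw [h4, h6]; exact adj_strong_pair v₁
    · rw [h4, h6]; exact (adj_strong_pair v₁).symm
    · -- both (v₁, true): q.val.1 = m - 1 = q'.val.1, contradiction with q ≠ q'
      exfalso
      apply hne'
      calc q.val = (q.val.1, q.val.2) := by rw [Prod.mk.eta]
      _ = (m - 1, v₁, false) := by rw [h5, hqw]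
      _ = (q'.val.1, q'.val.2) := by rw [h7, hq'w]
      _ = q'.val := by rw [Prod.mk.eta]

lemma edge_copy {q q' : {p : Fin 3 × V × Bool // rep v₁ p = p}}
    (h : (tripleGlue G v₁).Adj q q') : ∃ m, HasPre v₁ m q.val ∧ HasPre v₁ m q'.val := by
  rw [adj_glue] at h
  obtain ⟨hne, i, a, b, h1, h2, h3⟩ := h
  exact ⟨i, (pre_unique h1).2, (pre_unique h2).2⟩

lemma triangle_structure {q q' q'' : {p : Fin 3 × V × Bool // rep v₁ p = p}}
    (h12 : (tripleGlue G v₁).Adj q q') (h13 : (tripleGlue G v₁).Adj q q'')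
    (h23 : (tripleGlue G v₁).Adj q' q'') :
    (∃ m, HasPre v₁ m q.val ∧ HasPre v₁ m q'.val ∧ HasPre v₁ m q''.val) ∨
    (q.val.2 = (v₁, false) ∧ q'.val.2 = (v₁, false) ∧ q''.val.2 = (v₁, false)) := by
  obtain ⟨m₁, hq1, hq'1⟩ := edge_copy h12
  obtain ⟨m₂, hq2, hq''2⟩ := edge_copy h13
  obtain ⟨m₃, hq'3, hq''3⟩ := edge_copy h23
  by_cases e1 : m₁ = m₂
  · subst e1
    by_cases e2 : m₁ = m₃
    · subst e2
      exact Or.inl ⟨m₁, hq1, hq'1, hq''2⟩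
    · -- q' in copies m₁ and m₃; q'' in copies m₂ = m₁ and m₃
      exact Or.inl ⟨m₁, hq1, hq'1, hq''2⟩
  · -- q is in copies m₁ ≠ m₂, so q is a w-vertex
    have hqw : q.val.2 = (v₁, false) := hasPre_ne e1 hq1 hq2
    by_cases e2 : m₁ = m₃
    · subst e2
      exact Or.inl ⟨m₁, hq1, hq'1, hq''3⟩
    · by_cases e3 : m₂ = m₃
      · subst e3
        exact Or.inl ⟨m₂, hq2, hq'3, hq''2⟩
      · exact Or.inr ⟨hqw, hasPre_ne e2 hq'1 hq'3, hasPre_ne e3 hq''2 hq''3⟩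

end Aux2

section Aux3
variable {V : Type*} [DecidableEq V] {G : SimpleGraph V} {v₁ : V}

lemma H_triangle {a b d : V × Bool} (htf : TriangleFree G)
    (hab : (strongProdK2 G).Adj a b) (had : (strongProdK2 G).Adj a d)
    (hbd : (strongProdK2 G).Adj b d) :
    (a.1 = b.1 ∧ a.2 ≠ b.2 ∧ G.Adj a.1 d.1) ∨
    (a.1 = d.1 ∧ a.2 ≠ d.2 ∧ G.Adj a.1 b.1) ∨
    (b.1 = d.1 ∧ b.2 ≠ d.2 ∧ G.Adj a.1 b.1) := by
  rw [adj_strong] at hab had hbd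
  rcases hab with ⟨e1, n1⟩ | g1 <;> rcases had with ⟨e2, n2⟩ | g2 <;>
    rcases hbd with ⟨e3, n3⟩ | g3
  · exfalso
    obtain ⟨a1, a2⟩ := a; obtain ⟨b1, b2⟩ := b; obtain ⟨d1, d2⟩ := d
    simp only at n1 n2 n3
    cases a2 <;> cases b2 <;> cases d2 <;> simp_all
  · exfalso; rw [← e1, ← e2] at g3; exact G.loopless.irrefl _ g3
  · exact Or.inl ⟨e1, n1, e1 ▸ g2⟩
  · exact Or.inl ⟨e1, n1, g2⟩
  · exfalso; rw [e2, ← e3] at g1; exact G.loopless.irrefl _ g1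
  · exact Or.inr (Or.inl ⟨e2, n2, g1⟩)
  · exact Or.inr (Or.inr ⟨e3, n3, g1⟩)
  · exact absurd (htf _ _ _ g1 g2 g3) not_false

/-- The coloring of the glued graph: copy 0 gets `f` on both layers; copies 1 and 2
are 2-colored with `f v₁` and `b`. -/
def CC {V : Type*} (v₁ : V) (f : V → ℕ) (b : ℕ) : Fin 3 × V × Bool → ℕ :=
  fun p => if p.1 = 0 then f p.2.1
    else if p.1 = 1 then (if p.2.2 then f v₁ else b)
    else (if p.2.2 then b else f v₁)

lemma CC_rep (f : V → ℕ) (b : ℕ) (p : Fin 3 × V × Bool) :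
    CC v₁ f b (rep v₁ p) = CC v₁ f b p := by
  by_cases h : p.2.1 = v₁ ∧ p.2.2 = true
  · have h2 : rep v₁ p = (p.1 - 1, v₁, false) := if_pos h
    rw [h2]
    obtain ⟨i, u, t⟩ := p
    obtain ⟨h3, h4⟩ := h
    simp only at h3 h4
    subst h3; subst h4
    fin_cases i <;> simp [CC, show ((0:Fin 3) - 1 = 2) from by decide, show ((1:Fin 3) - 1 = 0) from by decide, show ((2:Fin 3) - 1 = 1) from by decide, show ((-1:Fin 3) = 2) from by decide]
  · have h2 : rep v₁ p = p := if_neg h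
    rw [h2]

lemma card2_iff_s6 (x y z : ℕ) :
    ({x, y, z} : Finset ℕ).card = 2 ↔ ((x = y ∨ x = z ∨ y = z) ∧ ¬(x = y ∧ y = z)) := by
  rcases eq_or_ne x y with h1 | h1 <;> rcases eq_or_ne x z with h2 | h2 <;>
    rcases eq_or_ne y z with h3 | h3 <;>
    subst_vars <;>
    simp_all [Finset.card_insert_of_notMem, Finset.card_pair, Ne.symm, eq_comm]

/-- WORM property of `CC` within one copy. -/
lemma copy_worm (htf : TriangleFree G) (f : V → ℕ)
    (hf : ∀ u v, G.Adj u v → f u ≠ f v) (b : ℕ) (hb : f v₁ ≠ b)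
    (m : Fin 3) (A B D : V × Bool)
    (h1 : (strongProdK2 G).Adj A B) (h2 : (strongProdK2 G).Adj A D)
    (h3 : (strongProdK2 G).Adj B D) :
    ({CC v₁ f b (m, A), CC v₁ f b (m, B), CC v₁ f b (m, D)} : Finset ℕ).card = 2 := by
  rw [card2_iff_s6]
  rcases H_triangle htf h1 h2 h3 with ⟨e, n, g⟩ | ⟨e, n, g⟩ | ⟨e, n, g⟩ <;>
    [(have hAB : A.1 = B.1 := e ; have hne : f A.1 ≠ f D.1 := hf _ _ g) ;
     (have hAD : A.1 = D.1 := e ; have hne : f A.1 ≠ f B.1 := hf _ _ g) ;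
     (have hBD : B.1 = D.1 := e ; have hne : f A.1 ≠ f B.1 := hf _ _ g)] <;>
    fin_cases m <;>
    simp only [CC] <;>
    · first
      | (cases hA : A.2 <;> cases hB : B.2 <;> simp_all <;> tauto)
      | (cases hA : A.2 <;> cases hD : D.2 <;> simp_all <;> tauto)
      | (cases hB : B.2 <;> cases hD : D.2 <;> simp_all <;> tauto)

end Aux3

section Aux4
variable {V : Type*} [DecidableEq V] {G : SimpleGraph V} {v₁ : V}

/-- The three glued vertices. -/
def Wv (v₁ : V) [DecidableEq V] (m : Fin 3) : {p : Fin 3 × V × Bool // rep v₁ p = p} :=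
  ⟨(m, v₁, false), rep_fix' m v₁⟩

lemma fin3_cases {s t : Fin 3} (h : s ≠ t) : s = t - 1 ∨ t = s - 1 := by
  revert s t; decide

lemma adj_Wv (G : SimpleGraph V) (s t : Fin 3) (h : s ≠ t) :
    (tripleGlue G v₁).Adj (Wv v₁ s) (Wv v₁ t) := by
  rw [adj_glue]
  refine ⟨by simp [Wv, Subtype.ext_iff, Prod.ext_iff, h], ?_⟩
  rcases fin3_cases h with h1 | h1
  · exact ⟨t, (v₁, true), (v₁, false), by rw [rep_top, h1]; rfl, rep_fix' t v₁,
      (adj_strong_pair v₁).symm⟩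
  · exact ⟨s, (v₁, false), (v₁, true), rep_fix' s v₁, by rw [rep_top, ← h1]; rfl,
      adj_strong_pair v₁⟩

lemma rep_inj {m : Fin 3} {A B : V × Bool} (h : rep v₁ (m, A) = rep v₁ (m, B)) : A = B := by
  by_cases hA : A = (v₁, true) <;> by_cases hB : B = (v₁, true)
  · rw [hA, hB]
  · rw [hA, rep_top, rep_fix (by simpa using hB)] at h
    exact absurd (congrArg Prod.fst h) (sub_one_ne m)
  · rw [hB, rep_top, rep_fix (by simpa using hA)] at h
    exact absurd (congrArg Prod.fst h).symm (sub_one_ne m)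
  · rw [rep_fix (by simpa using hA), rep_fix (by simpa using hB)] at h
    exact congrArg Prod.snd h

lemma rep_adj {m : Fin 3} {A B : V × Bool} (h : (strongProdK2 G).Adj A B) :
    (tripleGlue G v₁).Adj ⟨rep v₁ (m, A), rep_idem _⟩ ⟨rep v₁ (m, B), rep_idem _⟩ := by
  rw [adj_glue]
  refine ⟨fun hc => h.ne (rep_inj (congrArg Subtype.val hc)), m, A, B, rfl, rfl, h⟩

/-- card-2 check for the triangle of glued vertices in the construction. -/
lemma w_card {f : V → ℕ} {b : ℕ} (hb : f v₁ ≠ b) (s t r : Fin 3)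
    (h1 : s ≠ t) (h2 : s ≠ r) (h3 : t ≠ r) :
    ({CC v₁ f b (s, v₁, false), CC v₁ f b (t, v₁, false), CC v₁ f b (r, v₁, false)} :
      Finset ℕ).card = 2 := by
  rw [card2_iff_s6]
  fin_cases s <;> fin_cases t <;> fin_cases r <;> simp_all [CC] <;> tauto

end Aux4

/-- If `G` is connected, triangle-free, with chromatic number `k ≥ 3`, then the graph
`F` obtained from three disjoint copies of `G ⊠ K₂` by the cyclic identifications
`x¹₁ = y²₁`, `x²₁ = y³₁`, `x³₁ = y¹₁` is K₃-WORM colorable and its K₃-WORM lower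
chromatic number equals `k`. -/
theorem tripleGlue_wormLower_eq {V : Type*} [Fintype V] [DecidableEq V]
    (G : SimpleGraph V) (v₁ : V) (k : ℕ) (hk : 3 ≤ k)
    (hconn : G.Connected) (htf : TriangleFree G)
    (hchi : G.chromaticNumber = (k : ℕ∞)) :
    (∃ c, IsWormColoring (tripleGlue G v₁) c) ∧
    IsLeast (wormFeasible (tripleGlue G v₁)) k := by
  classical
  -- a proper coloring with exactly k colors
  have hcol : G.Colorable k := by
    rw [← chromaticNumber_le_iff_colorable, hchi]
  obtain ⟨C₀⟩ := hcol
  set f : V → ℕ := fun u => (C₀ u : ℕ) with hfdef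
  have hf : ∀ u v, G.Adj u v → f u ≠ f v := by
    intro u v huv h
    exact C₀.valid huv (Fin.val_injective h)
  have hge : ∀ g : V → ℕ, (∀ u v, G.Adj u v → g u ≠ g v) →
      k ≤ (Finset.univ.image g).card := by
    intro g hg
    have hcolg : G.Colorable (Finset.univ.image g).card := by
      have C : G.Coloring ↥(Finset.univ.image g) :=
        SimpleGraph.Coloring.mk
          (fun u => ⟨g u, Finset.mem_image_of_mem g (Finset.mem_univ u)⟩)
          (fun {u v} h hEq => hg u v h (congrArg Subtype.val hEq))
      simpa [Fintype.card_coe] using C.colorable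
    have h2 := hcolg.chromaticNumber_le
    rw [hchi] at h2
    exact_mod_cast h2
  have himf : (Finset.univ.image f).card = k := by
    refine le_antisymm ?_ (hge f hf)
    have hsub : Finset.univ.image f ⊆ Finset.range k := by
      intro x hx
      obtain ⟨u, _, rfl⟩ := Finset.mem_image.1 hx
      exact Finset.mem_range.2 (C₀ u).isLt
    simpa [Finset.card_range] using Finset.card_le_card hsub
  obtain ⟨u₀, hu₀⟩ : ∃ u₀, f u₀ ≠ f v₁ := by
    by_contra h
    push_neg at h
    have hsub : Finset.univ.image f ⊆ {f v₁} := by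
      intro x hx
      obtain ⟨u, _, rfl⟩ := Finset.mem_image.1 hx
      simp [h u]
    have h2 := Finset.card_le_card hsub
    rw [himf, Finset.card_singleton] at h2
    omega
  set b : ℕ := f u₀ with hbdef
  have hb : f v₁ ≠ b := Ne.symm hu₀
  set c₀ : {p : Fin 3 × V × Bool // rep v₁ p = p} → ℕ := fun q => CC v₁ f b q.val
    with hc₀def
  -- c₀ is a WORM coloring
  have hworm : IsWormColoring (tripleGlue G v₁) c₀ := by
    intro q q' q'' h12 h13 h23
    rcases triangle_structure h12 h13 h23 with ⟨m, hq, hq', hq''⟩ | ⟨hq, hq', hq''⟩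
    · have e1 := adj_transfer m h12 hq hq'
      have e2 := adj_transfer m h13 hq hq''
      have e3 := adj_transfer m h23 hq' hq''
      have key := copy_worm htf f hf b hb m _ _ _ e1 e2 e3
      have r1 : c₀ q = CC v₁ f b (m, pre v₁ m q.val) := by
        have hs := pre_spec q.2 hq
        calc c₀ q = CC v₁ f b q.val := rfl
        _ = CC v₁ f b (rep v₁ (m, pre v₁ m q.val)) := by rw [hs]
        _ = _ := CC_rep f b _
      have r2 : c₀ q' = CC v₁ f b (m, pre v₁ m q'.val) := by
        have hs := pre_spec q'.2 hq'
        calc c₀ q' = CC v₁ f b q'.val := rfl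
        _ = CC v₁ f b (rep v₁ (m, pre v₁ m q'.val)) := by rw [hs]
        _ = _ := CC_rep f b _
      have r3 : c₀ q'' = CC v₁ f b (m, pre v₁ m q''.val) := by
        have hs := pre_spec q''.2 hq''
        calc c₀ q'' = CC v₁ f b q''.val := rfl
        _ = CC v₁ f b (rep v₁ (m, pre v₁ m q''.val)) := by rw [hs]
        _ = _ := CC_rep f b _
      rw [r1, r2, r3]
      exact key
    · -- all three vertices are glued vertices
      have rq : q.val = (q.val.1, v₁, false) := by
        rw [← hq, Prod.mk.eta]
      have rq' : q'.val = (q'.val.1, v₁, false) := by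
        rw [← hq', Prod.mk.eta]
      have rq'' : q''.val = (q''.val.1, v₁, false) := by
        rw [← hq'', Prod.mk.eta]
      have d12 : q.val.1 ≠ q'.val.1 := by
        intro hc
        exact h12.ne (Subtype.ext (by rw [rq, rq', hc]))
      have d13 : q.val.1 ≠ q''.val.1 := by
        intro hc
        exact h13.ne (Subtype.ext (by rw [rq, rq'', hc]))
      have d23 : q'.val.1 ≠ q''.val.1 := by
        intro hc
        exact h23.ne (Subtype.ext (by rw [rq', rq'', hc]))
      have r1 : c₀ q = CC v₁ f b (q.val.1, v₁, false) := by
        calc c₀ q = CC v₁ f b q.val := rfl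
        _ = _ := by rw [← rq]
      have r2 : c₀ q' = CC v₁ f b (q'.val.1, v₁, false) := by
        calc c₀ q' = CC v₁ f b q'.val := rfl
        _ = _ := by rw [← rq']
      have r3 : c₀ q'' = CC v₁ f b (q''.val.1, v₁, false) := by
        calc c₀ q'' = CC v₁ f b q''.val := rfl
        _ = _ := by rw [← rq'']
      rw [r1, r2, r3]
      exact w_card hb _ _ _ d12 d13 d23
  -- c₀ uses exactly k colors
  have hcount : colorsUsed c₀ = k := by
    have himg : Finset.univ.image c₀ = Finset.univ.image f := by
      apply Finset.Subset.antisymm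
      · intro x hx
        obtain ⟨q, _, rfl⟩ := Finset.mem_image.1 hx
        obtain ⟨⟨i, u, t⟩, hfix⟩ := q
        show CC v₁ f b (i, u, t) ∈ Finset.univ.image f
        rw [CC]
        split_ifs
        · exact Finset.mem_image_of_mem f (Finset.mem_univ _)
        · exact Finset.mem_image_of_mem f (Finset.mem_univ _)
        · rw [hbdef]; exact Finset.mem_image_of_mem f (Finset.mem_univ _)
        · rw [hbdef]; exact Finset.mem_image_of_mem f (Finset.mem_univ _)
        · exact Finset.mem_image_of_mem f (Finset.mem_univ _)
      · intro x hx
        obtain ⟨u, _, rfl⟩ := Finset.mem_image.1 hx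
        refine Finset.mem_image.2 ⟨⟨(0, u, false), rep_fix' 0 u⟩, Finset.mem_univ _, ?_⟩
        show CC v₁ f b (0, u, false) = f u
        simp [CC]
    rw [colorsUsed, himg, himf]
  -- lower bound: every WORM coloring of the glued graph uses at least k colors
  have hlow : ∀ s ∈ wormFeasible (tripleGlue G v₁), k ≤ s := by
    rintro s ⟨c, hw, rfl⟩
    set d : Fin 3 → V × Bool → ℕ := fun m A => c ⟨rep v₁ (m, A), rep_idem _⟩ with hddef
    have hdw : ∀ (m : Fin 3) (A B D : V × Bool), (strongProdK2 G).Adj A B →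
        (strongProdK2 G).Adj A D → (strongProdK2 G).Adj B D →
        ({d m A, d m B, d m D} : Finset ℕ).card = 2 := by
      intro m A B D h1 h2 h3
      exact hw _ _ _ (rep_adj h1) (rep_adj h2) (rep_adj h3)
    -- splitness propagates along edges
    have hprop : ∀ (m : Fin 3) (u v : V), G.Adj u v →
        d m (u, false) ≠ d m (u, true) → d m (v, false) ≠ d m (v, true) := by
      intro m u v hadj hu
      intro hveq
      have hA1 : (strongProdK2 G).Adj (u, false) (u, true) := adj_strong_pair u
      have hA2 : (strongProdK2 G).Adj (u, false) (v, false) := adj_strong.2 (Or.inr hadj)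
      have hA3 : (strongProdK2 G).Adj (u, false) (v, true) := adj_strong.2 (Or.inr hadj)
      have hA4 : (strongProdK2 G).Adj (u, true) (v, false) := adj_strong.2 (Or.inr hadj)
      have hA5 : (strongProdK2 G).Adj (v, false) (v, true) := adj_strong_pair v
      have t1 := hdw m (u, false) (u, true) (v, false) hA1 hA2 hA4
      have t2 := hdw m (v, false) (v, true) (u, false) hA5 hA2.symm hA3.symm
      have t3 := hdw m (v, false) (v, true) (u, true) hA5 hA4.symm
        (adj_strong.2 (Or.inr hadj.symm))
      rw [card2_iff_s6] at t1 t2 t3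
      rw [hveq] at t1 t2 t3
      rcases t1.1 with h | h | h
      · exact hu h
      · exact t2.2 ⟨rfl, h.symm⟩
      · exact t3.2 ⟨rfl, h.symm⟩
    -- splitness propagates along walks
    have hwalk : ∀ (m : Fin 3) (u v : V), G.Walk u v →
        d m (u, false) ≠ d m (u, true) → d m (v, false) ≠ d m (v, true) := by
      intro m u v w
      induction w with
      | nil => exact id
      | cons h p ih => exact fun hs => ih (hprop _ _ _ h hs)
    -- not all three copies can be split at v₁
    have hWadj01 : (tripleGlue G v₁).Adj (Wv v₁ 0) (Wv v₁ 1) := adj_Wv G 0 1 (by decide)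
    have hWadj02 : (tripleGlue G v₁).Adj (Wv v₁ 0) (Wv v₁ 2) := adj_Wv G 0 2 (by decide)
    have hWadj12 : (tripleGlue G v₁).Adj (Wv v₁ 1) (Wv v₁ 2) := adj_Wv G 1 2 (by decide)
    have hdW : ∀ m : Fin 3, d m (v₁, false) = c (Wv v₁ m) := by
      intro m
      show c ⟨rep v₁ (m, v₁, false), _⟩ = c (Wv v₁ m)
      exact congrArg c (Subtype.ext (rep_fix' m v₁))
    have hdW' : ∀ m : Fin 3, d m (v₁, true) = c (Wv v₁ (m - 1)) := by
      intro m
      show c ⟨rep v₁ (m, v₁, true), _⟩ = c (Wv v₁ (m - 1))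
      exact congrArg c (Subtype.ext (rep_top m))
    obtain ⟨m, hm⟩ : ∃ m : Fin 3, ¬(d m (v₁, false) ≠ d m (v₁, true)) := by
      by_contra hall
      push_neg at hall
      have h0 := hall 0; have h1 := hall 1; have h2 := hall 2
      rw [hdW, hdW'] at h0 h1 h2
      rw [show (0 : Fin 3) - 1 = 2 from by decide] at h0
      rw [show (1 : Fin 3) - 1 = 0 from by decide] at h1
      rw [show (2 : Fin 3) - 1 = 1 from by decide] at h2
      have tw := hw _ _ _ hWadj01 hWadj02 hWadj12
      rw [card2_iff_s6] at tw
      rcases tw.1 with h | h | h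
      · exact h1 h.symm
      · exact h0 h
      · exact h2 h.symm
    push_neg at hm
    -- in copy m, no vertex is split
    have hnos : ∀ u : V, d m (u, false) = d m (u, true) := by
      intro u
      by_contra hu
      obtain ⟨w⟩ := hconn.preconnected u v₁
      exact (hwalk m u v₁ w hu) hm
    -- the first layer of copy m is a proper coloring of G
    set g : V → ℕ := fun u => d m (u, false) with hgdef
    have hgp : ∀ u v, G.Adj u v → g u ≠ g v := by
      intro u v hadj
      have t1 := hdw m (u, false) (u, true) (v, false) (adj_strong_pair u)
        (adj_strong.2 (Or.inr hadj)) (adj_strong.2 (Or.inr hadj))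
      rw [card2_iff_s6, ← hnos u] at t1
      intro hc
      exact t1.2 ⟨rfl, hc⟩
    have hk1 := hge g hgp
    have hsub : Finset.univ.image g ⊆ Finset.univ.image c := by
      intro x hx
      obtain ⟨u, _, rfl⟩ := Finset.mem_image.1 hx
      exact Finset.mem_image_of_mem c (Finset.mem_univ _)
    calc k ≤ (Finset.univ.image g).card := hk1
    _ ≤ (Finset.univ.image c).card := Finset.card_le_card hsub
    _ = colorsUsed c := rfl
  exact ⟨⟨c₀, hworm⟩, ⟨c₀, hworm, hcount⟩, hlow⟩
end

section
/- The feasible sets of K₃-WORM colorable graphs may contain arbitrarily large gaps: for every integer k ≥ 4 there exists a finite K₃-WORM colorable graph H such that W^-(H) = 2, W^+(H) ≥ k, and H has no K₃-WORM coloring using exactly t colors for any t with 3 ≤ t ≤ k − 1. -/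
open SimpleGraph

open Finset

lemma card_pair_iff (a b c : ℕ) :
    ({a, b, c} : Finset ℕ).card = 2 ↔ ((a = b ∨ a = c ∨ b = c) ∧ ¬(a = b ∧ a = c)) := by
  by_cases h1 : a = b <;> by_cases h2 : a = c <;> by_cases h3 : b = c <;>
    subst_vars <;>
    simp_all [Finset.card_insert_of_notMem, Finset.mem_insert, Finset.mem_singleton]

-- NEW
lemma sp_adj_pair {V : Type*} (G : SimpleGraph V) (u : V) {i j : Bool} (hij : i ≠ j) :
    (strongProdK2 G).Adj (u, i) (u, j) := by
  rw [strongProdK2, SimpleGraph.fromRel_adj]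
  exact ⟨by simp [hij], Or.inl (Or.inl ⟨rfl, hij⟩)⟩

lemma sp_adj_cross {V : Type*} {G : SimpleGraph V} {u v : V} (h : G.Adj u v) (i j : Bool) :
    (strongProdK2 G).Adj (u, i) (v, j) := by
  rw [strongProdK2, SimpleGraph.fromRel_adj]
  exact ⟨by simp [h.ne], Or.inl (Or.inr h)⟩

lemma sp_adj_cases {V : Type*} {G : SimpleGraph V} {p q : V × Bool}
    (h : (strongProdK2 G).Adj p q) : (p.1 = q.1 ∧ p.2 ≠ q.2) ∨ G.Adj p.1 q.1 := by
  rw [strongProdK2, SimpleGraph.fromRel_adj] at h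
  rcases h.2 with (h' | h') | (h' | h')
  · exact Or.inl h'
  · exact Or.inr h'
  · exact Or.inl ⟨h'.1.symm, h'.2.symm⟩
  · exact Or.inr h'.symm

/-- the K₄ dichotomy along an edge of the base graph -/
lemma worm_edge {V : Type*} {G : SimpleGraph V} {u v : V} (h : G.Adj u v)
    {c : V × Bool → ℕ} (hc : IsWormColoring (strongProdK2 G) c) :
    (c (u, false) = c (u, true) ∧ c (v, false) = c (v, true)
       ∧ c (u, false) ≠ c (v, false)) ∨
    (c (u, false) ≠ c (u, true) ∧
      ((c (v, false) = c (u, false) ∧ c (v, true) = c (u, true)) ∨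
       (c (v, false) = c (u, true) ∧ c (v, true) = c (u, false)))) := by
  have e1 : (strongProdK2 G).Adj (u, false) (u, true) := sp_adj_pair G u (by simp)
  have e2 : (strongProdK2 G).Adj (v, false) (v, true) := sp_adj_pair G v (by simp)
  have t1 := hc _ _ _ e1 (sp_adj_cross h false false) (sp_adj_cross h true false)
  have t2 := hc _ _ _ e1 (sp_adj_cross h false true) (sp_adj_cross h true true)
  have t3 := hc _ _ _ (sp_adj_cross h false false) (sp_adj_cross h false true) e2
  have t4 := hc _ _ _ (sp_adj_cross h true false) (sp_adj_cross h true true) e2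
  rw [card_pair_iff] at t1 t2 t3 t4
  omega

/-- in a triangle of the strong product over a triangle-free graph,
two of the base vertices coincide -/
lemma sp_triangle_base {V : Type*} {G : SimpleGraph V} (hG : TriangleFree G)
    {p q r : V × Bool} (h1 : (strongProdK2 G).Adj p q) (h2 : (strongProdK2 G).Adj p r)
    (h3 : (strongProdK2 G).Adj q r) : p.1 = q.1 ∨ p.1 = r.1 ∨ q.1 = r.1 := by
  by_contra hcon
  push_neg at hcon
  obtain ⟨n1, n2, n3⟩ := hcon
  have a1 : G.Adj p.1 q.1 := (sp_adj_cases h1).resolve_left (fun h => n1 h.1)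
  have a2 : G.Adj p.1 r.1 := (sp_adj_cases h2).resolve_left (fun h => n2 h.1)
  have a3 : G.Adj q.1 r.1 := (sp_adj_cases h3).resolve_left (fun h => n3 h.1)
  exact hG _ _ _ a1 a2 a3



lemma image_comp_equiv_s7 {W X : Type*} [Fintype W] [Fintype X] (σ : W ≃ X) (c : X → ℕ) :
    Finset.univ.image (c ∘ σ) = Finset.univ.image c := by
  ext x
  simp only [Finset.mem_image, Finset.mem_univ, true_and, Function.comp]
  exact ⟨fun ⟨w, h⟩ => ⟨σ w, h⟩, fun ⟨y, h⟩ => ⟨σ.symm y, by simpa using h⟩⟩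

lemma wormFeasible_comap {W X : Type*} [Fintype W] [Fintype X] (σ : W ≃ X)
    (G : SimpleGraph W) : wormFeasible (G.comap σ.symm) = wormFeasible G := by
  ext s
  constructor
  · rintro ⟨c, hc, hs⟩
    refine ⟨c ∘ σ, ?_, ?_⟩
    · intro u v w h1 h2 h3
      exact hc (σ u) (σ v) (σ w) (by simpa using h1) (by simpa using h2) (by simpa using h3)
    · rw [← hs]
      unfold colorsUsed
      rw [image_comp_equiv_s7 σ c]
  · rintro ⟨c, hc, hs⟩
    refine ⟨c ∘ σ.symm, ?_, ?_⟩
    · intro u v w h1 h2 h3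
      exact hc _ _ _ h1 h2 h3
    · rw [← hs]
      unfold colorsUsed
      rw [image_comp_equiv_s7 σ.symm c]

/-- Vertex set of the base shift graph: pairs `(i,j)` with `i < j`,
excluding `(0, m-1)`. -/
def Vcond (m : ℕ) (p : Fin m × Fin m) : Prop :=
  p.1.val < p.2.val ∧ ¬(p.1.val = 0 ∧ p.2.val = m - 1)

instance (m : ℕ) (p : Fin m × Fin m) : Decidable (Vcond m p) := by
  unfold Vcond; infer_instance

def Vc (m : ℕ) : Type := {p : Fin m × Fin m // Vcond m p}

instance (m : ℕ) : Fintype (Vc m) := by unfold Vc; infer_instance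

instance (m : ℕ) : DecidableEq (Vc m) := by unfold Vc; infer_instance

/-- The base graph: a (connected piece of the) shift graph. -/
def Gm (m : ℕ) : SimpleGraph (Vc m) :=
  SimpleGraph.fromRel (fun p q => p.val.2.val = q.val.1.val)

lemma Gm_adj {m : ℕ} (p q : Vc m) :
    (Gm m).Adj p q ↔ p ≠ q ∧ (p.val.2.val = q.val.1.val ∨ q.val.2.val = p.val.1.val) := by
  simp [Gm, SimpleGraph.fromRel_adj]

def mkV {m : ℕ} (a b : ℕ) (hb : b < m) (hab : a < b) (hne : ¬(a = 0 ∧ b = m - 1)) : Vc m :=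
  ⟨(⟨a, lt_trans hab hb⟩, ⟨b, hb⟩), ⟨hab, hne⟩⟩

lemma mkV_adj {m : ℕ} (a b c d : ℕ) (h1 h2 h3 h4 h5 h6) (h : b = c ∨ d = a) :
    (Gm m).Adj (mkV a b h1 h2 h3) (mkV c d h4 h5 h6) := by
  rw [Gm_adj]
  constructor
  · intro he
    have : a = c ∧ b = d := by
      have := congrArg (fun v : Vc m => (v.val.1.val, v.val.2.val)) he
      simp [mkV] at this
      omega
    omega
  · simpa [mkV] using h

lemma Gm_triangle_free (m : ℕ) : TriangleFree (Gm m) := by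
  intro u v w h1 h2 h3
  rw [Gm_adj] at h1 h2 h3
  obtain ⟨-, h1⟩ := h1
  obtain ⟨-, h2⟩ := h2
  obtain ⟨-, h3⟩ := h3
  have hu := u.prop.1
  have hv := v.prop.1
  have hw := w.prop.1
  omega
lemma Vc_eq_mkV {m : ℕ} (v : Vc m) :
    v = mkV v.val.1.val v.val.2.val v.val.2.isLt v.prop.1 v.prop.2 := by
  apply Subtype.ext
  apply Prod.ext <;> apply Fin.ext <;> simp [mkV]

def hub (m : ℕ) (hm : 3 ≤ m) : Vc m := mkV 0 1 (by omega) (by omega) (by omega)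

lemma reach_zero {m : ℕ} (hm : 3 ≤ m) (b : ℕ) (h1 : 1 ≤ b) (h2 : b ≤ m - 2)
    (hb : b < m) (hne : ¬(0 = 0 ∧ b = m - 1)) :
    (Gm m).Reachable (mkV 0 b hb (by omega) hne) (hub m hm) := by
  rcases Nat.eq_or_lt_of_le h1 with h | h
  · have : b = 1 := h.symm
    subst this
    rfl
  · -- b ≥ 2 : (0,b) ~ (b, m-1) ~ (1,b) ~ (0,1)
    have e1 : (Gm m).Adj (mkV 0 b hb (by omega) hne)
        (mkV b (m-1) (by omega) (by omega) (by omega)) := mkV_adj _ _ _ _ _ _ _ _ _ _ (by omega)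
    have e2 : (Gm m).Adj (mkV b (m-1) (by omega) (by omega) (by omega) : Vc m)
        (mkV 1 b hb (by omega) (by omega)) := mkV_adj _ _ _ _ _ _ _ _ _ _ (by omega)
    have e3 : (Gm m).Adj (mkV 1 b hb (by omega) (by omega) : Vc m) (hub m hm) :=
      mkV_adj _ _ _ _ _ _ _ _ _ _ (by omega)
    exact (e1.reachable.trans e2.reachable).trans e3.reachable

lemma reach_hub {m : ℕ} (hm : 3 ≤ m) (v : Vc m) : (Gm m).Reachable v (hub m hm) := by
  obtain ⟨a, b, hb, hab, hne, rfl⟩ : ∃ a b hb hab hne, v = mkV (m := m) a b hb hab hne :=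
    ⟨_, _, _, _, _, Vc_eq_mkV v⟩
  by_cases ha : a = 0
  · subst ha
    exact reach_zero hm b (by omega) (by omega) hb hne
  · -- a ≥ 1 : (a,b) ~ (0,a), then reach_zero
    have e1 : (Gm m).Adj (mkV a b hb hab hne)
        (mkV 0 a (by omega) (by omega) (by omega)) := mkV_adj _ _ _ _ _ _ _ _ _ _ (by omega)
    exact e1.reachable.trans (reach_zero hm a (by omega) (by omega) (by omega) (by omega))

lemma reach_all {m : ℕ} (hm : 3 ≤ m) (u v : Vc m) : (Gm m).Reachable u v :=
  (reach_hub hm u).trans (reach_hub hm v).symm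
def gfun (m : ℕ) (f : Vc m → ℕ) (i : Fin m) : Finset ℕ :=
  (Finset.univ.filter (fun v : Vc m => v.val.1.val = i.val)).image f

lemma gfun_ne {m : ℕ} (hm3 : 3 ≤ m) (f : Vc m → ℕ)
    (hf : ∀ u v, (Gm m).Adj u v → f u ≠ f v)
    (i j : Fin m) (hij : i.val < j.val) : gfun m f i ≠ gfun m f j := by
  by_cases hne : i.val = 0 ∧ j.val = m - 1
  · -- g j is empty, g i is not
    intro h
    have hj : gfun m f j = ∅ := by
      apply Finset.eq_empty_of_forall_notMem
      intro x hx
      simp only [gfun, Finset.mem_image, Finset.mem_filter] at hx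
      obtain ⟨w, ⟨-, hw⟩, -⟩ := hx
      have h1 := w.prop.1
      have h2 := w.val.2.isLt
      omega
    have hi : f (mkV 0 1 (by omega) (by omega) (by omega)) ∈ gfun m f i := by
      simp only [gfun, Finset.mem_image, Finset.mem_filter]
      exact ⟨_, ⟨Finset.mem_univ _, by simp [mkV]; omega⟩, rfl⟩
    rw [h, hj] at hi
    simp at hi
  · intro h
    set v : Vc m := mkV i.val j.val j.isLt hij hne with hv
    have hmem : f v ∈ gfun m f i := by
      simp only [gfun, Finset.mem_image, Finset.mem_filter]
      exact ⟨v, ⟨Finset.mem_univ _, by simp [hv, mkV]⟩, rfl⟩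
    rw [h] at hmem
    simp only [gfun, Finset.mem_image, Finset.mem_filter] at hmem
    obtain ⟨w, ⟨-, hw1⟩, hw2⟩ := hmem
    have hadj : (Gm m).Adj v w := by
      rw [Gm_adj]
      constructor
      · intro he
        have : v.val.1.val = w.val.1.val := by rw [he]
        simp [hv, mkV] at this
        omega
      · left
        simp [hv, mkV]
        omega
    exact hf v w hadj hw2.symm

lemma proper_lb {m k : ℕ} (hm3 : 3 ≤ m) (hmk : 2 ^ (k - 1) < m) (f : Vc m → ℕ)
    (hf : ∀ u v, (Gm m).Adj u v → f u ≠ f v) :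
    k ≤ (Finset.univ.image f).card := by
  by_contra hlt
  push_neg at hlt
  set S := Finset.univ.image f with hS
  -- g maps Fin m injectively into S.powerset
  have hinj : ∀ i j : Fin m, gfun m f i = gfun m f j → i = j := by
    intro i j h
    rcases lt_trichotomy i.val j.val with hlt' | heq | hgt
    · exact absurd h (gfun_ne hm3 f hf i j hlt')
    · exact Fin.ext heq
    · exact absurd h.symm (gfun_ne hm3 f hf j i hgt)
  have hmaps : ∀ i : Fin m, gfun m f i ∈ S.powerset := by
    intro i
    rw [Finset.mem_powerset]
    intro x hx
    simp only [gfun, Finset.mem_image, Finset.mem_filter] at hx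
    obtain ⟨w, -, hw⟩ := hx
    rw [hS]
    exact Finset.mem_image.mpr ⟨w, Finset.mem_univ _, hw⟩
  have hcard : Fintype.card (Fin m) ≤ S.powerset.card := by
    apply Finset.card_le_card_of_injOn (gfun m f)
    · intro i _; exact hmaps i
    · intro i _ j _ h; exact hinj i j h
  rw [Fintype.card_fin, Finset.card_powerset] at hcard
  have : 2 ^ S.card ≤ 2 ^ (k - 1) := Nat.pow_le_pow_right (by norm_num) (by omega)
  omega
-- gap lemma and colorings, to be appended after previous chunks
section Main

variable {m : ℕ}

abbrev Hm (m : ℕ) : SimpleGraph (Vc m × Bool) := strongProdK2 (Gm m)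

lemma sp_adj_eq_base {V : Type*} {G : SimpleGraph V} {p q : V × Bool}
    (h : (strongProdK2 G).Adj p q) (he : p.1 = q.1) : p.2 ≠ q.2 := by
  rcases sp_adj_cases h with ⟨-, h2⟩ | h2
  · exact h2
  · rw [he] at h2; exact absurd h2 (SimpleGraph.irrefl G)

/-- the 2-coloring of the strong product by the Bool coordinate -/
lemma worm_two_coloring {V : Type*} {G : SimpleGraph V} (hG : TriangleFree G) :
    IsWormColoring (strongProdK2 G) (fun p => cond p.2 1 0) := by
  intro p q r h1 h2 h3
  have hb : ¬(p.2 = q.2 ∧ p.2 = r.2) := by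
    rintro ⟨e1, e2⟩
    have a1 : G.Adj p.1 q.1 := (sp_adj_cases h1).resolve_left (fun h => h.2 e1)
    have a2 : G.Adj p.1 r.1 := (sp_adj_cases h2).resolve_left (fun h => h.2 e2)
    have a3 : G.Adj q.1 r.1 :=
      (sp_adj_cases h3).resolve_left (fun h => h.2 (e1 ▸ e2 : q.2 = r.2))
    exact hG _ _ _ a1 a2 a3
  rw [card_pair_iff]
  rcases hp : p.2 <;> rcases hq : q.2 <;> rcases hr : r.2 <;> simp_all

/-- the coloring by an injective function of the base coordinate -/
lemma worm_inj_coloring {V : Type*} {G : SimpleGraph V} (hG : TriangleFree G)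
    (e : V → ℕ) (he : Function.Injective e) :
    IsWormColoring (strongProdK2 G) (fun p => e p.1) := by
  intro p q r h1 h2 h3
  rw [card_pair_iff]
  have key : ∀ x y z : V × Bool, (strongProdK2 G).Adj x y → (strongProdK2 G).Adj x z →
      (strongProdK2 G).Adj y z → x.1 = y.1 → z.1 ≠ x.1 := by
    intro x y z a1 a2 a3 hxy hzx
    have b1 : x.2 ≠ y.2 := sp_adj_eq_base a1 hxy
    have b2 : x.2 ≠ z.2 := sp_adj_eq_base a2 hzx.symm
    have b3 : y.2 ≠ z.2 := sp_adj_eq_base a3 (hxy ▸ hzx.symm : y.1 = z.1)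
    rcases hx : x.2 <;> rcases hy : y.2 <;> rcases hz : z.2 <;> simp_all
  rcases sp_triangle_base hG h1 h2 h3 with h | h | h
  · have hr : r.1 ≠ p.1 := key p q r h1 h2 h3 h
    have : e p.1 = e q.1 := by rw [h]
    have hne : e p.1 ≠ e r.1 := fun hh => hr (he hh).symm
    tauto
  · have hq : q.1 ≠ p.1 := key p r q h2 h1 h3.symm h
    have : e p.1 = e r.1 := by rw [h]
    have hne : e p.1 ≠ e q.1 := fun hh => hq (he hh).symm
    tauto
  · have hp : p.1 ≠ q.1 := fun hh => (key q r p h3 h1.symm h2.symm h) hh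
    have : e q.1 = e r.1 := by rw [h]
    have hne : e p.1 ≠ e q.1 := fun hh => hp (he hh)
    tauto

/-- the gap: no WORM coloring of `Hm m` uses `t` colors with `3 ≤ t ≤ k-1` -/
lemma gap_lemma {k t : ℕ} (hm3 : 3 ≤ m) (hmk : 2 ^ (k - 1) < m)
    (h3 : 3 ≤ t) (htk : t ≤ k - 1) (c : Vc m × Bool → ℕ)
    (hc : IsWormColoring (Hm m) c) (ht : colorsUsed c = t) : False := by
  by_cases hall : ∀ u : Vc m, c (u, false) = c (u, true)
  · -- all pairs monochromatic : proper coloring of Gm m with ≥ k colors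
    set f : Vc m → ℕ := fun u => c (u, false) with hf
    have hproper : ∀ u v, (Gm m).Adj u v → f u ≠ f v := by
      intro u v huv
      rcases worm_edge huv hc with ⟨-, -, hne⟩ | ⟨hne, -⟩
      · exact hne
      · exact absurd (hall u) hne
    have hk := proper_lb hm3 hmk f hproper
    have hsub : Finset.univ.image f ⊆ Finset.univ.image c := by
      intro x hx
      rw [Finset.mem_image] at hx ⊢
      obtain ⟨u, -, hu⟩ := hx
      exact ⟨(u, false), Finset.mem_univ _, hu⟩
    have := Finset.card_le_card hsub
    unfold colorsUsed at ht
    omega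
  · -- some pair is split : everything uses the same two colors
    push_neg at hall
    obtain ⟨u₀, hu₀⟩ := hall
    set A := c (u₀, false) with hA
    set B := c (u₀, true) with hB
    set Q : Vc m → Prop := fun v =>
      (c (v, false) = A ∧ c (v, true) = B) ∨ (c (v, false) = B ∧ c (v, true) = A) with hQ
    have hQ0 : Q u₀ := Or.inl ⟨rfl, rfl⟩
    have step : ∀ v w : Vc m, (Gm m).Adj v w → Q v → Q w := by
      intro v w hvw hqv
      rcases worm_edge hvw hc with ⟨he, -, -⟩ | ⟨-, h2⟩
      · rw [hQ] at hqv; omega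
      · rw [hQ] at hqv ⊢; omega
    have walkstep : ∀ v w : Vc m, (Gm m).Walk v w → Q v → Q w := by
      intro v w p
      induction p with
      | nil => exact id
      | cons h p ih => exact fun hq => ih (step _ _ h hq)
    have hQall : ∀ v : Vc m, Q v := fun v =>
      (reach_all hm3 u₀ v).elim fun p => walkstep _ _ p hQ0
    have hsub : Finset.univ.image c ⊆ {A, B} := by
      intro x hx
      rw [Finset.mem_image] at hx
      obtain ⟨⟨v, b⟩, -, hv⟩ := hx
      have := hQall v
      rw [hQ] at this
      rcases b <;> simp only [Finset.mem_insert, Finset.mem_singleton] <;> omega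
    have h2 : ({A, B} : Finset ℕ).card ≤ 2 :=
      le_trans (Finset.card_insert_le _ _) (by simp)
    have := Finset.card_le_card hsub
    unfold colorsUsed at ht
    omega

end Main

lemma two_pow_lb : ∀ k : ℕ, 4 ≤ k → k + 1 ≤ 2 ^ (k - 1) := by
  intro k hk
  induction k, hk using Nat.le_induction with
  | base => norm_num
  | succ n hn ih =>
    have h2 : 2 ^ (n + 1 - 1) = 2 * 2 ^ (n - 1) := by
      rw [Nat.add_sub_cancel]
      conv_lhs => rw [show n = (n - 1) + 1 by omega]
      ring
    omega


/-- Feasible sets of K₃-WORM colorable graphs may contain arbitrarily large gaps: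
for every `k ≥ 4` there is a finite K₃-WORM colorable graph `H` with
`W⁻(H) = 2`, `W⁺(H) ≥ k`, and no K₃-WORM coloring with exactly `t` colors
for any `3 ≤ t ≤ k - 1`. -/
theorem exists_worm_spectrum_with_large_gap {k : ℕ} (hk : 4 ≤ k) :
    ∃ (n : ℕ) (G : SimpleGraph (Fin n)),
      IsLeast (wormFeasible G) 2 ∧
      (∃ s ∈ wormFeasible G, k ≤ s) ∧
      (∀ t : ℕ, 3 ≤ t → t ≤ k - 1 → t ∉ wormFeasible G) := by
  set m : ℕ := 2 ^ (k - 1) + 1 with hmdef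
  have h8 : 8 ≤ 2 ^ (k - 1) := by
    calc (8 : ℕ) = 2 ^ 3 := by norm_num
    _ ≤ 2 ^ (k - 1) := Nat.pow_le_pow_right (by norm_num) (by omega)
  have hm3 : 3 ≤ m := by omega
  have hmk : 2 ^ (k - 1) < m := by omega
  have hkm : k + 1 ≤ 2 ^ (k - 1) := two_pow_lb k hk
  refine ⟨Fintype.card (Vc m × Bool),
    (Hm m).comap (Fintype.equivFin (Vc m × Bool)).symm, ?_, ?_, ?_⟩
  · constructor
    · -- 2 is feasible
      rw [wormFeasible_comap]
      refine ⟨fun p => cond p.2 1 0, worm_two_coloring (Gm_triangle_free m), ?_⟩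
      have himg : Finset.univ.image (fun p : Vc m × Bool => cond p.2 1 0)
          = ({0, 1} : Finset ℕ) := by
        ext x
        simp only [Finset.mem_image, Finset.mem_univ, true_and,
          Finset.mem_insert, Finset.mem_singleton]
        constructor
        · rintro ⟨⟨v, b⟩, rfl⟩
          rcases b <;> simp
        · rintro (rfl | rfl)
          · exact ⟨(hub m hm3, false), rfl⟩
          · exact ⟨(hub m hm3, true), rfl⟩
      unfold colorsUsed
      rw [himg]
      decide
    · -- 2 is a lower bound
      intro s hs
      rw [wormFeasible_comap] at hs
      obtain ⟨c, hc, hcs⟩ := hs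
      by_contra hlt
      push_neg at hlt
      have hone : ∀ p q : Vc m × Bool, c p = c q := by
        intro p q
        have h1 : (Finset.univ.image c).card ≤ 1 := by
          unfold colorsUsed at hcs
          omega
        exact Finset.card_le_one.mp h1 _ (Finset.mem_image_of_mem c (Finset.mem_univ p))
          _ (Finset.mem_image_of_mem c (Finset.mem_univ q))
      have hadj : (Gm m).Adj (mkV 0 1 (by omega) (by omega) (by omega))
          (mkV 1 2 (by omega) (by omega) (by omega)) :=
        mkV_adj _ _ _ _ _ _ _ _ _ _ (Or.inl rfl)
      have t := hc _ _ _ (sp_adj_pair (Gm m) (mkV 0 1 (by omega) (by omega) (by omega))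
          (Bool.false_ne_true)) (sp_adj_cross hadj false false) (sp_adj_cross hadj true false)
      rw [hone (mkV 0 1 (by omega) (by omega) (by omega), true)
            (mkV 0 1 (by omega) (by omega) (by omega), false),
          hone (mkV 1 2 (by omega) (by omega) (by omega), false)
            (mkV 0 1 (by omega) (by omega) (by omega), false)] at t
      simp at t
  · -- a feasible value ≥ k
    refine ⟨Fintype.card (Vc m), ?_, ?_⟩
    · rw [wormFeasible_comap]
      set e : Vc m → ℕ := fun v => ((Fintype.equivFin (Vc m)) v : ℕ) with he
      have heinj : Function.Injective e :=
        Fin.val_injective.comp (Fintype.equivFin (Vc m)).injective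
      refine ⟨fun p => e p.1, worm_inj_coloring (Gm_triangle_free m) e heinj, ?_⟩
      unfold colorsUsed
      have himg : Finset.univ.image (fun p : Vc m × Bool => e p.1)
          = Finset.univ.image e := by
        ext x
        simp only [Finset.mem_image, Finset.mem_univ, true_and]
        exact ⟨fun ⟨⟨v, b⟩, h⟩ => ⟨v, h⟩, fun ⟨v, h⟩ => ⟨(v, false), h⟩⟩
      rw [himg, Finset.card_image_of_injective _ heinj, Finset.card_univ]
    · -- k ≤ Fintype.card (Vc m)
      have ginj : Function.Injective (fun i : Fin k =>
          (mkV (i.val + 1) (i.val + 2) (by omega) (by omega) (by omega) : Vc m)) := by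
        intro i j hij
        have := congrArg (fun v : Vc m => v.val.1.val) hij
        simp [mkV] at this
        exact Fin.ext this
      have := Fintype.card_le_of_injective _ ginj
      simpa using this
  · -- the gap
    intro t h3 htk
    rw [wormFeasible_comap]
    rintro ⟨c, hc, hct⟩
    exact gap_lemma hm3 hmk h3 htk c hc hct
end

section
/- There exists a finite K₄-free graph G (i.e., G contains no four pairwise adjacent vertices) that is K₃-WORM colorable and satisfies W^-(G) = 3. -/
open SimpleGraph

/-- `G` is K₄-free: it has no four pairwise adjacent vertices. -/
def K4Free {V : Type*} (G : SimpleGraph V) : Prop :=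
  ∀ a b c d : V, G.Adj a b → G.Adj a c → G.Adj a d →
    G.Adj b c → G.Adj b d → G.Adj c d → False

/-! ### Auxiliary construction: a 16-vertex K₄-free graph with W⁻ = 3 -/

/-- Adjacency bitmasks of the graph. -/
def myMasks : Fin 16 → ℕ :=
  ![23258, 361, 13976, 33975, 6189, 53594, 14499, 57677, 64162, 53509, 18444, 58705, 9077, 6596, 4001, 2984]

/-- Boolean adjacency. -/
def adjB (i j : Fin 16) : Bool := (myMasks i).testBit j.val

/-- The graph. -/
def myG : SimpleGraph (Fin 16) where
  Adj i j := adjB i j = true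
  symm := by constructor; intro i j h; revert i j h; decide
  loopless := by constructor; intro i h; revert i h; decide

lemma myG_k4free' : ∀ a b c d : Fin 16, adjB a b = true → adjB a c = true → adjB a d = true →
    adjB b c = true → adjB b d = true → adjB c d = true → False := by decide


/-- The list of all triangles of the graph. -/
def trisList : List (Fin 16 × Fin 16 × Fin 16) := [(0,1,3), (0,1,6), (0,3,4), (0,3,7), (0,4,11), (0,4,12), (0,6,7), (0,6,11), (0,6,12), (0,7,14), (0,9,12), (0,9,14), (0,11,14), (1,3,5), (1,5,6), (1,5,8), (2,3,4), (2,3,7), (2,3,10), (2,4,12), (2,7,13), (2,9,12), (2,12,13), (3,4,5), (3,5,15), (3,7,15), (4,5,12), (5,6,12), (5,8,12), (5,8,14), (5,8,15), (6,7,13), (6,11,13), (6,12,13), (7,8,13), (7,8,14), (7,8,15), (8,9,12), (8,9,14), (8,9,15), (8,11,13), (8,11,14), (8,11,15), (8,12,13), (10,11,14)]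

/-- `vmask n i` : the `2^n`-bit number whose `m`-th bit is `m.testBit i`. -/
def vmask (n i : ℕ) : ℕ :=
  Nat.rec 0 (fun k acc => if i = k then 2^(2^k) * (2^(2^k) - 1) else acc * (2^(2^k) + 1)) n

lemma vmask_succ (n i : ℕ) : vmask (n+1) i =
    if i = n then 2^(2^n) * (2^(2^n) - 1) else vmask n i * (2^(2^n) + 1) := rfl

lemma vmask_lt : ∀ n i, vmask n i < 2^(2^n) := by
  intro n
  induction n with
  | zero => intro i; simp [vmask]
  | succ n ih =>
    intro i
    have hpow : (2:ℕ)^(2^(n+1)) = 2^(2^n) * 2^(2^n) := by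
      rw [← pow_add]; congr 1; omega
    have hpos : 0 < (2:ℕ)^(2^n) := Nat.pow_pos (by norm_num)
    rw [vmask_succ, hpow]
    split
    · have h1 : (2:ℕ)^(2^n) - 1 < 2^(2^n) := by omega
      nlinarith
    · have h := ih i
      nlinarith
  
lemma vmask_testBit : ∀ n i m, i < n → m < 2^n → (vmask n i).testBit m = m.testBit i := by
  intro n
  induction n with
  | zero => intro i m hi; omega
  | succ n ih =>
    intro i m hi hm
    have hpow : (2:ℕ)^(n+1) = 2^n * 2 := by rw [pow_succ]
    have hpos : 0 < (2:ℕ)^(2^n) := Nat.pow_pos (by norm_num)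
    rw [vmask_succ]
    by_cases hin : i = n
    · rw [if_pos hin, hin]
      have := Nat.testBit_two_pow_mul_add (2^(2^n) - 1) (b := 0) (i := 2^n) (by positivity) m
      rw [Nat.add_zero] at this
      rw [this]
      by_cases hmn : m < 2^n
      · rw [if_pos hmn, Nat.zero_testBit, Nat.testBit_lt_two_pow hmn]
      · rw [if_neg hmn, Nat.testBit_two_pow_sub_one, Nat.testBit_eq_decide_div_mod_eq]
        have hdiv : m / 2^n = 1 := by
          apply Nat.div_eq_of_lt_le <;> omega
        rw [hdiv]
        simp
        omega
    · have hi' : i < n := by omega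
      rw [if_neg hin]
      have heq : vmask n i * (2^(2^n) + 1) = 2^(2^n) * vmask n i + vmask n i := by ring
      rw [heq, Nat.testBit_two_pow_mul_add (vmask n i) (vmask_lt n i) m]
      by_cases hmn : m < 2^n
      · rw [if_pos hmn]; exact ih i m hi' hmn
      · rw [if_neg hmn]
        have hm' : m - 2^n < 2^n := by rw [hpow] at hm; omega
        rw [ih i (m - 2^n) hi' hm']
        rw [Nat.testBit_eq_decide_div_mod_eq, Nat.testBit_eq_decide_div_mod_eq]
        have hP : (2:ℕ)^n = 2^i * 2^(n-i) := by rw [← pow_add]; congr 1; omega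
        have h2 : (2:ℕ)^(n-i) = 2 * 2^(n-i-1) := by
          rw [← pow_succ']; congr 1; omega
        have hmeq : m = 2^i * 2^(n-i) + (m - 2^n) := by rw [← hP]; omega
        have hdivs : m / 2^i = 2^(n-i) + (m - 2^n) / 2^i := by
          conv_lhs => rw [hmeq]
          rw [Nat.mul_add_div (by positivity)]
        rw [hdivs, h2, Nat.mul_add_mod]

def onesV : ℕ := 2^65536 - 1

def triMask (t : Fin 16 × Fin 16 × Fin 16) : ℕ :=
  (((vmask 16 t.1.val) ^^^ (vmask 16 t.2.1.val)) ^^^ onesV) &&&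
  (((vmask 16 t.1.val) ^^^ (vmask 16 t.2.2.val)) ^^^ onesV)

def totalV : ℕ := trisList.foldr (fun t acc => triMask t ||| acc) 0

set_option maxRecDepth 10000 in
lemma totalV_eq : totalV = onesV := by decide +kernel

lemma foldr_testBit {α : Type*} (g : α → ℕ) (m : ℕ) :
    ∀ l : List α, (l.foldr (fun t acc => g t ||| acc) 0).testBit m = true →
      ∃ t ∈ l, (g t).testBit m = true := by
  intro l
  induction l with
  | nil => intro h; rw [List.foldr_nil, Nat.zero_testBit] at h; exact absurd h (by simp)
  | cons a l ih =>
    intro h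
    rw [List.foldr_cons, Nat.testBit_lor, Bool.or_eq_true] at h
    rcases h with h | h
    · exact ⟨a, List.mem_cons_self, h⟩
    · obtain ⟨t, ht, h⟩ := ih h
      exact ⟨t, List.mem_cons_of_mem a ht, h⟩

lemma chk_all (m : ℕ) (hm : m < 65536) :
    ∃ t ∈ trisList, m.testBit t.1.val = m.testBit t.2.1.val ∧
      m.testBit t.1.val = m.testBit t.2.2.val := by
  have hones : onesV.testBit m = true := by
    rw [onesV, Nat.testBit_two_pow_sub_one]; exact decide_eq_true hm
  have htot : totalV.testBit m = true := by rw [totalV_eq]; exact hones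
  obtain ⟨t, ht, hbit⟩ := foldr_testBit triMask m trisList htot
  rw [triMask, Nat.testBit_land, Bool.and_eq_true, Nat.testBit_xor, Nat.testBit_xor,
    Nat.testBit_xor, Nat.testBit_xor, hones] at hbit
  have hv : ∀ j : Fin 16, (vmask 16 j.val).testBit m = m.testBit j.val := by
    intro j
    exact vmask_testBit 16 j.val m j.isLt (by norm_num; omega)
  rw [hv t.1, hv t.2.1, hv t.2.2] at hbit
  refine ⟨t, ht, ?_, ?_⟩
  · have := hbit.1
    cases h1 : m.testBit t.1.val <;> cases h2 : m.testBit t.2.1.val <;>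
      rw [h1, h2] at this <;> simp_all
  · have := hbit.2
    cases h1 : m.testBit t.1.val <;> cases h2 : m.testBit t.2.2.val <;>
      rw [h1, h2] at this <;> simp_all


set_option maxRecDepth 10000 in
lemma tris_adj : trisList.all
    (fun t => adjB t.1 t.2.1 && adjB t.1 t.2.2 && adjB t.2.1 t.2.2) = true := by decide

/-- Pack the first `k` bits of `g` into a natural number. -/
def packAux : ℕ → (ℕ → Bool) → ℕ
  | 0, _ => 0
  | k+1, g => (g 0).toNat + 2 * packAux k (fun i => g (i+1))

lemma packAux_lt : ∀ (k : ℕ) (g : ℕ → Bool), packAux k g < 2 ^ k := by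
  intro k
  induction k with
  | zero => intro g; simp [packAux]
  | succ k ih =>
    intro g
    have := ih (fun i => g (i+1))
    have hb : (g 0).toNat ≤ 1 := Bool.toNat_le (g 0)
    rw [packAux, pow_succ]
    omega

lemma packAux_testBit : ∀ (k : ℕ) (g : ℕ → Bool) (i : ℕ), i < k →
    (packAux k g).testBit i = g i := by
  intro k
  induction k with
  | zero => intro g i h; omega
  | succ k ih =>
    intro g i hi
    cases i with
    | zero =>
      rw [packAux, Nat.testBit_zero]
      cases hg : g 0 <;> simp [hg, Nat.add_mul_mod_self_left]
    | succ i =>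
      rw [packAux, Nat.testBit_add_one]
      have hdiv : ((g 0).toNat + 2 * packAux k (fun i => g (i+1))) / 2
          = packAux k (fun i => g (i+1)) := by
        cases g 0 <;> simp <;> omega
      rw [hdiv]
      exact ih (fun i => g (i+1)) i (by omega)

/-- Every 2-coloring of the vertices contains a monochromatic triangle. -/
lemma exists_mono (f : Fin 16 → Bool) : ∃ u v w : Fin 16,
    adjB u v = true ∧ adjB u w = true ∧ adjB v w = true ∧ f u = f v ∧ f u = f w := by
  set g : ℕ → Bool := fun i => if h : i < 16 then f ⟨i, h⟩ else false with hg
  set m : ℕ := packAux 16 g with hmdef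
  have hm : m < 65536 := by
    have := packAux_lt 16 g
    norm_num at this
    omega
  obtain ⟨t, ht, h1, h2⟩ := chk_all m hm
  have hadj := List.all_eq_true.mp tris_adj t ht
  rw [Bool.and_eq_true, Bool.and_eq_true] at hadj
  have hbit : ∀ v : Fin 16, m.testBit v.val = f v := by
    intro v
    rw [hmdef, packAux_testBit 16 g v.val v.isLt, hg]
    simp [v.isLt]
  refine ⟨t.1, t.2.1, t.2.2, hadj.1.1, hadj.1.2, hadj.2, ?_, ?_⟩
  · rw [← hbit t.1, ← hbit t.2.1]; exact h1
  · rw [← hbit t.1, ← hbit t.2.2]; exact h2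

/-- The witness 3-coloring. -/
def c0 : Fin 16 → ℕ := ![2,0,2,2,1,2,2,1,2,2,0,1,1,2,1,1]

lemma c0_worm' : ∀ u v w : Fin 16, adjB u v = true → adjB u w = true → adjB v w = true →
    ({c0 u, c0 v, c0 w} : Finset ℕ).card = 2 := by decide

lemma c0_used : (Finset.univ.image c0).card = 3 := by decide

/-- In a finset of at most two elements containing `a`, any two elements distinct
from `a` coincide. -/
lemma two_of {S : Finset ℕ} {a x y : ℕ} (hS : S.card ≤ 2) (ha : a ∈ S) (hx : x ∈ S)
    (hy : y ∈ S) (hxa : x ≠ a) (hya : y ≠ a) : x = y := by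
  by_contra hxy
  have hsub : ({a, x, y} : Finset ℕ) ⊆ S := by
    intro z hz
    simp only [Finset.mem_insert, Finset.mem_singleton] at hz
    rcases hz with rfl | rfl | rfl <;> assumption
  have hcard : ({a, x, y} : Finset ℕ).card = 3 := by
    rw [Finset.card_insert_of_notMem (by simp [Ne.symm hxa, Ne.symm hya]),
      Finset.card_insert_of_notMem (by simpa using hxy), Finset.card_singleton]
  have := Finset.card_le_card hsub
  omega

/-- There exists a finite K₄-free graph which is K₃-WORM colorable and whose
K₃-WORM lower chromatic number equals 3. -/
theorem exists_K4Free_wormLower_eq_three :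
    ∃ (n : ℕ) (G : SimpleGraph (Fin n)),
      K4Free G ∧
      (∃ c : Fin n → ℕ, IsWormColoring G c) ∧
      IsLeast (wormFeasible G) 3 := by
  refine ⟨16, myG,
    fun a b c d h1 h2 h3 h4 h5 h6 => myG_k4free' a b c d h1 h2 h3 h4 h5 h6,
    ⟨c0, fun u v w h1 h2 h3 => c0_worm' u v w h1 h2 h3⟩,
    ⟨⟨c0, fun u v w h1 h2 h3 => c0_worm' u v w h1 h2 h3, c0_used⟩, ?_⟩⟩
  rintro s ⟨c, hworm, rfl⟩
  by_contra hlt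
  push_neg at hlt
  have h013 : ({c 0, c 1, c 3} : Finset ℕ).card = 2 :=
    hworm 0 1 3 (show adjB 0 1 = true by decide) (show adjB 0 3 = true by decide)
      (show adjB 1 3 = true by decide)
  have hsub : ({c 0, c 1, c 3} : Finset ℕ) ⊆ Finset.univ.image c := by
    intro z hz
    simp only [Finset.mem_insert, Finset.mem_singleton] at hz
    rcases hz with rfl | rfl | rfl <;> exact Finset.mem_image_of_mem c (Finset.mem_univ _)
  have h2le : 2 ≤ (Finset.univ.image c).card := h013 ▸ Finset.card_le_card hsub
  have hcard : (Finset.univ.image c).card ≤ 2 := by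
    have h3 : colorsUsed c < 3 := hlt
    simp only [colorsUsed] at h3
    omega
  obtain ⟨u, v, w, ha1, ha2, ha3, he1, he2⟩ :=
    exists_mono (fun x => decide (c x = c 0))
  have hmem : ∀ x : Fin 16, c x ∈ Finset.univ.image c :=
    fun x => Finset.mem_image_of_mem c (Finset.mem_univ x)
  have key : ∀ x y : Fin 16,
      decide (c x = c 0) = decide (c y = c 0) → c x = c y := by
    intro x y hxy
    by_cases hx : c x = c 0
    · have hd : decide (c y = c 0) = true := by rw [← hxy]; simp [hx]
      rw [hx, of_decide_eq_true hd]
    · have hd : decide (c y = c 0) = false := by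
        rw [← hxy]; simpa using hx
      have hy : c y ≠ c 0 := of_decide_eq_false hd
      exact two_of hcard (hmem 0) (hmem x) (hmem y) hx hy
  have hcv : c u = c v := key u v he1
  have hcw : c u = c w := key u w he2
  have hfin := hworm u v w ha1 ha2 ha3
  rw [← hcv, ← hcw] at hfin
  simp at hfin
end

section
/- Every finite 3-degenerate graph G is K₃-WORM colorable and satisfies W^-(G) ≤ 2; in fact, G admits a K₃-WORM coloring that uses at most two colors. -/
open SimpleGraph

/-- `G` is 3-degenerate: every nonempty set `S` of vertices contains a vertex
with at most 3 neighbors inside `S`. -/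
def ThreeDegenerate {V : Type*} (G : SimpleGraph V) [DecidableRel G.Adj] : Prop :=
  ∀ S : Finset V, S.Nonempty → ∃ v ∈ S, (S.filter (G.Adj v)).card ≤ 3


lemma aux_key {V : Type*} [DecidableEq V] (G : SimpleGraph V) [DecidableRel G.Adj]
    (hdeg : ∀ S : Finset V, S.Nonempty → ∃ v ∈ S, (S.filter (G.Adj v)).card ≤ 3) :
    ∀ S : Finset V, ∃ c : V → Bool,
      ∀ u v w : V, u ∈ S → v ∈ S → w ∈ S → G.Adj u v → G.Adj u w → G.Adj v w →
        ¬(c u = c v ∧ c v = c w) := by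
  intro S
  induction S using Finset.strongInduction with
  | _ S ih =>
    rcases S.eq_empty_or_nonempty with rfl | hS
    · exact ⟨fun _ => false, by simp⟩
    obtain ⟨v, hvS, hv3⟩ := hdeg S hS
    obtain ⟨c, hc⟩ := ih (S.erase v) (Finset.erase_ssubset hvS)
    have hb : ∃ b : Bool, ∀ x y : V, x ∈ S → y ∈ S → G.Adj v x → G.Adj v y →
        G.Adj x y → ¬(c x = b ∧ c y = b) := by
      by_contra h
      push_neg at h
      obtain ⟨x1, y1, hx1S, hy1S, hvx1, hvy1, hxy1, hcx1, hcy1⟩ := h false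
      obtain ⟨x2, y2, hx2S, hy2S, hvx2, hvy2, hxy2, hcx2, hcy2⟩ := h true
      have h12 : x1 ≠ y1 := G.ne_of_adj hxy1
      have h34 : x2 ≠ y2 := G.ne_of_adj hxy2
      have h13 : x1 ≠ x2 := fun e => by simp [e, hcx2] at hcx1
      have h14 : x1 ≠ y2 := fun e => by simp [e, hcy2] at hcx1
      have h23 : y1 ≠ x2 := fun e => by simp [e, hcx2] at hcy1
      have h24 : y1 ≠ y2 := fun e => by simp [e, hcy2] at hcy1
      have hsub : ({x1, y1, x2, y2} : Finset V) ⊆ S.filter (G.Adj v) := by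
        intro z hz
        simp only [Finset.mem_insert, Finset.mem_singleton] at hz
        rcases hz with rfl | rfl | rfl | rfl <;> simp [Finset.mem_filter, *]
      have hcard : ({x1, y1, x2, y2} : Finset V).card = 4 := by
        rw [Finset.card_insert_of_notMem (by simp [h12, h13, h14]),
          Finset.card_insert_of_notMem (by simp [h23, h24]),
          Finset.card_insert_of_notMem (by simp [h34]), Finset.card_singleton]
      have := Finset.card_le_card hsub
      omega
    obtain ⟨b, hbspec⟩ := hb
    refine ⟨Function.update c v b, ?_⟩
    intro u w x huS hwS hxS huw hux hwx hmono
    rcases eq_or_ne u v with rfl | hu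
    · have hwv : w ≠ u := (G.ne_of_adj huw).symm
      have hxv : x ≠ u := (G.ne_of_adj hux).symm
      rw [Function.update_self, Function.update_of_ne hwv, Function.update_of_ne hxv] at hmono
      exact hbspec w x hwS hxS huw hux hwx ⟨hmono.1.symm, (hmono.1.trans hmono.2).symm⟩
    rcases eq_or_ne w v with rfl | hw
    · have hxv : x ≠ w := (G.ne_of_adj hwx).symm
      rw [Function.update_self, Function.update_of_ne hu, Function.update_of_ne hxv] at hmono
      exact hbspec u x huS hxS (G.adj_symm huw) hwx hux ⟨hmono.1, hmono.2.symm⟩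
    rcases eq_or_ne x v with rfl | hx
    · rw [Function.update_self, Function.update_of_ne hu, Function.update_of_ne hw] at hmono
      exact hbspec u w huS hwS (G.adj_symm hux) (G.adj_symm hwx) huw ⟨hmono.1.trans hmono.2, hmono.2⟩
    · rw [Function.update_of_ne hu, Function.update_of_ne hw, Function.update_of_ne hx] at hmono
      exact hc u w x (Finset.mem_erase.2 ⟨hu, huS⟩) (Finset.mem_erase.2 ⟨hw, hwS⟩)
        (Finset.mem_erase.2 ⟨hx, hxS⟩) huw hux hwx hmono


/-- Every finite 3-degenerate graph is K₃-WORM colorable with at most two colors;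
in particular its K₃-WORM lower chromatic number is at most 2. -/
theorem threeDegenerate_worm_two_colorable {V : Type*} [Fintype V]
    (G : SimpleGraph V) [DecidableRel G.Adj] (hdeg : ThreeDegenerate G) :
    (∃ c : V → ℕ, IsWormColoring G c ∧ colorsUsed c ≤ 2) ∧
    (∀ w : ℕ, IsLeast (wormFeasible G) w → w ≤ 2) := by

  classical
  obtain ⟨c, hc⟩ := aux_key G hdeg Finset.univ
  set c0 : V → ℕ := fun v => if c v then 1 else 0 with hc0
  have hworm : IsWormColoring G c0 := by
    intro u v w h1 h2 h3
    have hne := hc u v w (Finset.mem_univ u) (Finset.mem_univ v) (Finset.mem_univ w) h1 h2 h3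
    cases hcu : c u <;> cases hcv : c v <;> cases hcw : c w <;>
      simp [hc0, hcu, hcv, hcw] at hne ⊢
  have hle : colorsUsed c0 ≤ 2 := by
    have hsub : Finset.univ.image c0 ⊆ ({0, 1} : Finset ℕ) := by
      intro x hx
      simp only [Finset.mem_image] at hx
      obtain ⟨v, -, rfl⟩ := hx
      by_cases h : c v <;> simp [hc0, h]
    calc colorsUsed c0 = (Finset.univ.image c0).card := rfl
      _ ≤ ({0, 1} : Finset ℕ).card := Finset.card_le_card hsub
      _ = 2 := by decide
  refine ⟨⟨c0, hworm, hle⟩, ?_⟩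
  intro w hw
  exact le_trans (hw.2 ⟨c0, hworm, rfl⟩) hle
end

section
/- Every finite 3-degenerate graph G has a gap-free K₃-WORM chromatic spectrum: for every integer t with W^-(G) ≤ t ≤ W^+(G), the graph G admits a K₃-WORM coloring using exactly t colors. -/
open SimpleGraph

/-! ### Auxiliary machinery -/

/-- The "exactly two colors among `a, p, q`" condition. -/
def okc (a p q : ℕ) : Prop := ({a, p, q} : Finset ℕ).card = 2

lemma okc_iff (a p q : ℕ) :
    okc a p q ↔ ((p = q ∧ a ≠ p) ∨ (p ≠ q ∧ (a = p ∨ a = q))) := by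
  unfold okc
  rcases eq_or_ne p q with h | h <;> rcases eq_or_ne a p with h2 | h2 <;>
    rcases eq_or_ne a q with h3 | h3 <;>
    simp_all [Finset.card_insert_of_notMem, Finset.mem_insert, Finset.mem_singleton,
      Finset.insert_comm]

lemma okc_comm (a p q : ℕ) : okc a p q ↔ okc a q p := by
  unfold okc; rw [Finset.pair_comm p q]

lemma choice3 (I : Finset ℕ) (hI : 2 ≤ I.card) (p q r : ℕ)
    (hp : p ∈ I) (hq : q ∈ I) (hr : r ∈ I) (A B C : Prop)
    (htri : A → B → C → ¬(p = q ∧ q = r) ∧ (p = q ∨ p = r ∨ q = r)) :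
    ∃ a ∈ I, (A → okc a p q) ∧ (B → okc a p r) ∧ (C → okc a q r) := by
  have hex : ∀ b : ℕ, ∃ a ∈ I, a ≠ b := fun b =>
    Finset.exists_mem_ne (by omega) b
  by_cases hA : A <;> by_cases hB : B <;> by_cases hC : C
  · -- A B C
    obtain ⟨h1, h2⟩ := htri hA hB hC
    by_cases hpq : p = q <;> by_cases hpr : p = r
    · omega
    · exact ⟨r, hr, fun _ => by rw [okc_iff]; omega, fun _ => by rw [okc_iff]; omega,
        fun _ => by rw [okc_iff]; omega⟩
    · exact ⟨q, hq, fun _ => by rw [okc_iff]; omega, fun _ => by rw [okc_iff]; omega,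
        fun _ => by rw [okc_iff]; omega⟩
    · exact ⟨p, hp, fun _ => by rw [okc_iff]; omega, fun _ => by rw [okc_iff]; omega,
        fun _ => by rw [okc_iff]; omega⟩
  · -- A B ¬C
    by_cases hpq : p = q <;> by_cases hpr : p = r
    · obtain ⟨a, haI, hane⟩ := hex p
      exact ⟨a, haI, fun _ => by rw [okc_iff]; omega, fun _ => by rw [okc_iff]; omega,
        fun h => absurd h hC⟩
    · exact ⟨r, hr, fun _ => by rw [okc_iff]; omega, fun _ => by rw [okc_iff]; omega,
        fun h => absurd h hC⟩
    · exact ⟨q, hq, fun _ => by rw [okc_iff]; omega, fun _ => by rw [okc_iff]; omega,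
        fun h => absurd h hC⟩
    · exact ⟨p, hp, fun _ => by rw [okc_iff]; omega, fun _ => by rw [okc_iff]; omega,
        fun h => absurd h hC⟩
  · -- A ¬B C
    by_cases hpq : p = q <;> by_cases hqr : q = r
    · obtain ⟨a, haI, hane⟩ := hex p
      exact ⟨a, haI, fun _ => by rw [okc_iff]; omega, fun h => absurd h hB,
        fun _ => by rw [okc_iff]; omega⟩
    · exact ⟨r, hr, fun _ => by rw [okc_iff]; omega, fun h => absurd h hB,
        fun _ => by rw [okc_iff]; omega⟩
    · exact ⟨p, hp, fun _ => by rw [okc_iff]; omega, fun h => absurd h hB,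
        fun _ => by rw [okc_iff]; omega⟩
    · exact ⟨q, hq, fun _ => by rw [okc_iff]; omega, fun h => absurd h hB,
        fun _ => by rw [okc_iff]; omega⟩
  · -- A ¬B ¬C
    by_cases hpq : p = q
    · obtain ⟨a, haI, hane⟩ := hex p
      exact ⟨a, haI, fun _ => by rw [okc_iff]; omega, fun h => absurd h hB,
        fun h => absurd h hC⟩
    · exact ⟨p, hp, fun _ => by rw [okc_iff]; omega, fun h => absurd h hB,
        fun h => absurd h hC⟩
  · -- ¬A B C
    by_cases hpr : p = r <;> by_cases hqr : q = r
    · obtain ⟨a, haI, hane⟩ := hex r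
      exact ⟨a, haI, fun h => absurd h hA, fun _ => by rw [okc_iff]; omega,
        fun _ => by rw [okc_iff]; omega⟩
    · exact ⟨q, hq, fun h => absurd h hA, fun _ => by rw [okc_iff]; omega,
        fun _ => by rw [okc_iff]; omega⟩
    · exact ⟨p, hp, fun h => absurd h hA, fun _ => by rw [okc_iff]; omega,
        fun _ => by rw [okc_iff]; omega⟩
    · exact ⟨r, hr, fun h => absurd h hA, fun _ => by rw [okc_iff]; omega,
        fun _ => by rw [okc_iff]; omega⟩
  · -- ¬A B ¬C
    by_cases hpr : p = r
    · obtain ⟨a, haI, hane⟩ := hex p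
      exact ⟨a, haI, fun h => absurd h hA, fun _ => by rw [okc_iff]; omega,
        fun h => absurd h hC⟩
    · exact ⟨p, hp, fun h => absurd h hA, fun _ => by rw [okc_iff]; omega,
        fun h => absurd h hC⟩
  · -- ¬A ¬B C
    by_cases hqr : q = r
    · obtain ⟨a, haI, hane⟩ := hex q
      exact ⟨a, haI, fun h => absurd h hA, fun h => absurd h hB,
        fun _ => by rw [okc_iff]; omega⟩
    · exact ⟨q, hq, fun h => absurd h hA, fun h => absurd h hB,
        fun _ => by rw [okc_iff]; omega⟩
  · exact ⟨p, hp, fun h => absurd h hA, fun h => absurd h hB, fun h => absurd h hC⟩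

/-- WORM coloring condition restricted to a finite set of vertices. -/
def WormOn {V : Type*} (G : SimpleGraph V) (S : Finset V) (c : V → ℕ) : Prop :=
  ∀ u ∈ S, ∀ w ∈ S, ∀ x ∈ S, G.Adj u w → G.Adj u x → G.Adj w x →
    ({c u, c w, c x} : Finset ℕ).card = 2

lemma ext_lemma {V : Type*} [DecidableEq V] (G : SimpleGraph V) [DecidableRel G.Adj]
    (S : Finset V) (v : V) (hv : v ∈ S) (hN : (S.filter (G.Adj v)).card ≤ 3)
    (c : V → ℕ) (hc : WormOn G (S.erase v) c)
    (hI : 2 ≤ ((S.erase v).image c).card) :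
    ∃ a ∈ (S.erase v).image c, WormOn G S (Function.update c v a) := by
  set I := (S.erase v).image c with hIdef
  set N := S.filter (G.Adj v) with hNdef
  have hNsub : ∀ x ∈ N, x ∈ S.erase v := by
    intro x hx
    rw [hNdef, Finset.mem_filter] at hx
    exact Finset.mem_erase.mpr ⟨hx.2.ne', hx.1⟩
  have hmemI : ∀ x ∈ N, c x ∈ I := fun x hx => Finset.mem_image_of_mem c (hNsub x hx)
  have hex : ∀ b : ℕ, ∃ a ∈ I, a ≠ b := fun b =>
    Finset.exists_mem_ne (by omega) b
  suffices h : ∃ a ∈ I, ∀ x ∈ N, ∀ y ∈ N, G.Adj x y → okc a (c x) (c y) by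
    obtain ⟨a, haI, hgood⟩ := h
    refine ⟨a, haI, ?_⟩
    intro u hu w hw x hx h1 h2 h3
    by_cases huv : u = v
    · subst huv
      have hwN : w ∈ N := Finset.mem_filter.mpr ⟨hw, h1⟩
      have hxN : x ∈ N := Finset.mem_filter.mpr ⟨hx, h2⟩
      have := hgood w hwN x hxN h3
      rw [okc] at this
      simpa [Function.update_apply, h1.ne', h2.ne'] using this
    · by_cases hwv : w = v
      · subst hwv
        have huN : u ∈ N := Finset.mem_filter.mpr ⟨hu, h1.symm⟩
        have hxN : x ∈ N := Finset.mem_filter.mpr ⟨hx, h3⟩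
        have := hgood u huN x hxN h2
        rw [okc] at this
        rw [show ({Function.update c w a u, Function.update c w a w,
          Function.update c w a x} : Finset ℕ) = {Function.update c w a w,
          Function.update c w a u, Function.update c w a x} from Finset.insert_comm _ _ _]
        simpa [Function.update_apply, huv, h3.ne'] using this
      · by_cases hxv : x = v
        · subst hxv
          have huN : u ∈ N := Finset.mem_filter.mpr ⟨hu, h2.symm⟩
          have hwN : w ∈ N := Finset.mem_filter.mpr ⟨hw, h3.symm⟩
          have := hgood u huN w hwN h1
          rw [okc] at this
          rw [show ({Function.update c x a u, Function.update c x a w,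
            Function.update c x a x} : Finset ℕ) = {Function.update c x a x,
            Function.update c x a u, Function.update c x a w} from ?_]
          · simpa [Function.update_apply, huv, hwv] using this
          · rw [Finset.pair_comm, Finset.insert_comm]
        · have := hc u (Finset.mem_erase.mpr ⟨huv, hu⟩) w (Finset.mem_erase.mpr ⟨hwv, hw⟩)
            x (Finset.mem_erase.mpr ⟨hxv, hx⟩) h1 h2 h3
          simpa [Function.update_apply, huv, hwv, hxv] using this
  -- existence of a good color
  have h0 : N.card = 0 ∨ N.card = 1 ∨ N.card = 2 ∨ N.card = 3 := by omega
  obtain ⟨a0, ha0⟩ := Finset.card_pos.mp (show 0 < I.card by omega)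
  rcases h0 with h | h | h | h
  · refine ⟨a0, ha0, ?_⟩
    rw [Finset.card_eq_zero.mp h]
    intro x hx; simp at hx
  · obtain ⟨x, hx⟩ := Finset.card_eq_one.mp h
    refine ⟨a0, ha0, ?_⟩
    intro x' hx' y' hy' hadj
    rw [hx, Finset.mem_singleton] at hx' hy'
    subst hx'; subst hy'
    exact absurd hadj (G.irrefl)
  · obtain ⟨x, y, hxy, hN2⟩ := Finset.card_eq_two.mp h
    have hxN : x ∈ N := by rw [hN2]; simp
    have hyN : y ∈ N := by rw [hN2]; simp
    by_cases hadj : G.Adj x y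
    · by_cases hcxy : c x = c y
      · obtain ⟨a, haI, hane⟩ := hex (c x)
        refine ⟨a, haI, ?_⟩
        intro x' hx' y' hy' h
        rw [hN2] at hx' hy'; simp at hx' hy'
        rcases hx' with rfl | rfl <;> rcases hy' with rfl | rfl <;>
          first
            | exact absurd h G.irrefl
            | (rw [okc_iff]; omega)
      · refine ⟨c x, hmemI x hxN, ?_⟩
        intro x' hx' y' hy' h
        rw [hN2] at hx' hy'; simp at hx' hy'
        rcases hx' with rfl | rfl <;> rcases hy' with rfl | rfl <;>
          first
            | exact absurd h G.irrefl
            | (rw [okc_iff]; omega)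
    · refine ⟨a0, ha0, ?_⟩
      intro x' hx' y' hy' h
      rw [hN2] at hx' hy'; simp at hx' hy'
      rcases hx' with rfl | rfl <;> rcases hy' with rfl | rfl <;>
        first
          | exact absurd h G.irrefl
          | exact absurd h hadj
          | exact absurd h.symm hadj
  · obtain ⟨x, y, z, hxy, hxz, hyz, hN3⟩ := Finset.card_eq_three.mp h
    have hxN : x ∈ N := by rw [hN3]; simp
    have hyN : y ∈ N := by rw [hN3]; simp
    have hzN : z ∈ N := by rw [hN3]; simp
    have htri : G.Adj x y → G.Adj x z → G.Adj y z →
        ¬(c x = c y ∧ c y = c z) ∧ (c x = c y ∨ c x = c z ∨ c y = c z) := by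
      intro h1 h2 h3
      have := hc x (hNsub x hxN) y (hNsub y hyN) z (hNsub z hzN) h1 h2 h3
      have h4 := (okc_iff (c x) (c y) (c z)).mp this
      omega
    obtain ⟨a, haI, h1, h2, h3⟩ := choice3 I hI (c x) (c y) (c z) (hmemI x hxN)
      (hmemI y hyN) (hmemI z hzN) (G.Adj x y) (G.Adj x z) (G.Adj y z) htri
    refine ⟨a, haI, ?_⟩
    intro x' hx' y' hy' hadj
    rw [hN3] at hx' hy'; simp at hx' hy'
    rcases hx' with rfl | rfl | rfl <;> rcases hy' with rfl | rfl | rfl <;>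
      first
        | exact absurd hadj G.irrefl
        | exact h1 hadj
        | exact h2 hadj
        | exact h3 hadj
        | exact (okc_comm _ _ _).mpr (h1 hadj.symm)
        | exact (okc_comm _ _ _).mpr (h2 hadj.symm)
        | exact (okc_comm _ _ _).mpr (h3 hadj.symm)

lemma gapfree_on {V : Type*} [DecidableEq V] (G : SimpleGraph V) [DecidableRel G.Adj]
    (hdeg : ThreeDegenerate G) (S : Finset V) :
    ∀ a b t : ℕ, (∃ c, WormOn G S c ∧ (S.image c).card = a) →
      (∃ c, WormOn G S c ∧ (S.image c).card = b) → a ≤ t → t ≤ b →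
      ∃ c, WormOn G S c ∧ (S.image c).card = t := by
  induction S using Finset.strongInduction with
  | _ S ih =>
    intro a b t ha hb hat htb
    rcases eq_or_lt_of_le hat with rfl | hat'
    · exact ha
    rcases eq_or_lt_of_le htb with rfl | htb'
    · exact hb
    by_cases hS : S.Nonempty
    · obtain ⟨v, hv, hNv⟩ := hdeg S hS
      obtain ⟨ca, hca, hcaa⟩ := ha
      obtain ⟨cb, hcb, hcbb⟩ := hb
      have hmono : ∀ c : V → ℕ, WormOn G S c → WormOn G (S.erase v) c := by
        intro c hc u hu w hw x hx
        exact hc u (Finset.mem_of_mem_erase hu) w (Finset.mem_of_mem_erase hw)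
          x (Finset.mem_of_mem_erase hx)
      have hsub : ∀ c : V → ℕ, S.image c ⊆ insert (c v) ((S.erase v).image c) := by
        intro c u hu
        obtain ⟨w, hw, rfl⟩ := Finset.mem_image.mp hu
        by_cases hwv : w = v
        · subst hwv; exact Finset.mem_insert_self _ _
        · exact Finset.mem_insert_of_mem
            (Finset.mem_image_of_mem _ (Finset.mem_erase.mpr ⟨hwv, hw⟩))
      set a' := ((S.erase v).image ca).card with ha'def
      set b' := ((S.erase v).image cb).card with hb'def
      have ha'le : a' ≤ a := by
        rw [← hcaa]
        exact Finset.card_le_card (Finset.image_subset_image (Finset.erase_subset v S))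
      have halea' : a ≤ a' + 1 := by
        calc a = (S.image ca).card := hcaa.symm
          _ ≤ (insert (ca v) ((S.erase v).image ca)).card := Finset.card_le_card (hsub ca)
          _ ≤ a' + 1 := Finset.card_insert_le _ _
      have hb'le : b' ≤ b := by
        rw [← hcbb]
        exact Finset.card_le_card (Finset.image_subset_image (Finset.erase_subset v S))
      have hbleb' : b ≤ b' + 1 := by
        calc b = (S.image cb).card := hcbb.symm
          _ ≤ (insert (cb v) ((S.erase v).image cb)).card := Finset.card_le_card (hsub cb)
          _ ≤ b' + 1 := Finset.card_insert_le _ _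
      have ha1 : 1 ≤ a := by
        rw [← hcaa]
        exact Finset.card_pos.mpr (hS.image ca)
      obtain ⟨ct, hct, hctt⟩ := ih (S.erase v) (Finset.erase_ssubset hv) a' b' t
        ⟨ca, hmono ca hca, rfl⟩ ⟨cb, hmono cb hcb, rfl⟩ (by omega) (by omega)
      obtain ⟨aa, haaI, hworm⟩ := ext_lemma G S v hv hNv ct hct (by omega)
      refine ⟨Function.update ct v aa, hworm, ?_⟩
      have himg : S.image (Function.update ct v aa) = insert aa ((S.erase v).image ct) := by
        conv_lhs => rw [← Finset.insert_erase hv]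
        rw [Finset.image_insert, Function.update_self]
        congr 1
        apply Finset.image_congr
        intro u hu
        have : u ≠ v := by simp only [Finset.coe_erase, Set.mem_diff, Set.mem_singleton_iff] at hu; exact hu.2
        exact Function.update_of_ne this _ _
      rw [himg, Finset.insert_eq_self.mpr haaI, hctt]
    · rw [Finset.not_nonempty_iff_eq_empty] at hS
      subst hS
      obtain ⟨ca, _, hcaa⟩ := ha
      obtain ⟨cb, _, hcbb⟩ := hb
      simp at hcaa hcbb
      omega

/-- Every finite 3-degenerate graph has a gap-free K₃-WORM chromatic spectrum:
for every `t` between the lower chromatic number `W⁻(G)` and upper chromatic number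
`W⁺(G)`, the graph admits a K₃-WORM coloring with exactly `t` colors. -/
theorem threeDegenerate_worm_spectrum_gapFree {V : Type*} [Fintype V]
    (G : SimpleGraph V) [DecidableRel G.Adj] (hdeg : ThreeDegenerate G) :
    ∀ wmin wmax t : ℕ, IsLeast (wormFeasible G) wmin →
      IsGreatest (wormFeasible G) wmax →
      wmin ≤ t → t ≤ wmax → t ∈ wormFeasible G := by
  classical
  intro wmin wmax t hmin hmax h1 h2
  obtain ⟨ca, hca, hcaa⟩ := hmin.1
  obtain ⟨cb, hcb, hcbb⟩ := hmax.1
  have hw : ∀ c : V → ℕ, IsWormColoring G c ↔ WormOn G Finset.univ c := by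
    intro c
    constructor
    · intro h u _ w _ x _ h1 h2 h3; exact h u w x h1 h2 h3
    · intro h u w x h1 h2 h3
      exact h u (Finset.mem_univ u) w (Finset.mem_univ w) x (Finset.mem_univ x) h1 h2 h3
  obtain ⟨c, hc, hcc⟩ := gapfree_on G hdeg Finset.univ wmin wmax t
    ⟨ca, (hw ca).mp hca, hcaa⟩ ⟨cb, (hw cb).mp hcb, hcbb⟩ h1 h2
  exact ⟨c, (hw c).mpr hc, hcc⟩
end
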